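/- arXiv:1710.02240 — 4 statements merged into one kernel-verified Lean document; each statement's English description precedes it below -/
import Mathlib

section
/- Let φ be a nonnegative nontrivial Radon measure on Ω̄ decomposed as φ = φ_ac·dy + φ_s with φ_ac ∈ L¹(Ω) nonnegative and φ_s ⟂ dy nonnegative. Then φ solves μ(M⋆φ − φ) + (a(y)+λ)φ = 0 in the sense of measures if and only if: (i) μ(M⋆φ)(y) + (a(y) − μ + λ)φ_ac(y) = 0 for Lebesgue-a.e. y, and (ii) a(y) − μ + λ = 0 for φ_s-a.e. y. -/
open MeasureTheory Set

open scoped NNReal ENNReal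

section Aux

variable {α : Type*} [MeasurableSpace α]

lemma aux_split (ρ σ : Measure α) (fac : α → ℝ)
    (hfac : Integrable fac ρ) (hnn : ∀ y, 0 ≤ fac y) (w : α → ℝ)
    (hw1 : AEStronglyMeasurable w ρ) (hw2 : Integrable w σ)
    (C : ℝ) (hwb : ∀ᵐ y ∂ρ, |w y| ≤ C) :
    ∫ y, w y ∂(ρ.withDensity (fun y => ENNReal.ofReal (fac y)) + σ)
      = (∫ y, w y * fac y ∂ρ) + ∫ y, w y ∂σ := by
  have hfnn : AEMeasurable (fun y => (fac y).toNNReal) ρ :=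
    measurable_real_toNNReal.comp_aemeasurable hfac.aestronglyMeasurable.aemeasurable
  have hfsm : AEStronglyMeasurable (fun y => ((fac y).toNNReal : ℝ)) ρ :=
    (measurable_coe_nnreal_real.comp_aemeasurable hfnn).aestronglyMeasurable
  have hint : Integrable (fun y => (fac y).toNNReal • w y) ρ := by
    refine Integrable.mono' (hfac.abs.const_mul C) ?_ ?_
    · refine (hfsm.mul hw1).congr (Filter.Eventually.of_forall fun y => ?_)
      simp [NNReal.smul_def]
    · filter_upwards [hwb] with y hy
      have h2 : ((fac y).toNNReal : ℝ) = fac y := Real.coe_toNNReal _ (hnn y)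
      simp only [NNReal.smul_def, smul_eq_mul, Real.norm_eq_abs, abs_mul, h2,
        abs_of_nonneg (hnn y)]
      calc fac y * |w y| ≤ fac y * C := mul_le_mul_of_nonneg_left hy (hnn y)
        _ = C * fac y := mul_comm _ _
  have hwd : Integrable w (ρ.withDensity fun y => ENNReal.ofReal (fac y)) := by
    rw [show (fun y => ENNReal.ofReal (fac y)) = fun y => (((fac y).toNNReal : ℝ≥0) : ℝ≥0∞)
      from rfl]
    exact (integrable_withDensity_iff_integrable_smul₀ hfnn).2 hint
  rw [integral_add_measure hwd hw2]
  congr 1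
  rw [show (fun y => ENNReal.ofReal (fac y)) = fun y => (((fac y).toNNReal : ℝ≥0) : ℝ≥0∞)
      from rfl, integral_withDensity_eq_integral_smul₀ hfnn w]
  refine integral_congr_ae (Filter.Eventually.of_forall fun y => ?_)
  simp only [NNReal.smul_def, smul_eq_mul]
  rw [Real.coe_toNNReal _ (hnn y), mul_comm]

lemma aux_int (ρ : Measure α) (u : α → ℝ) (hu : AEStronglyMeasurable u ρ) (ψ : α → ℝ) :
    ∫ x, ψ x ∂(ρ.withDensity (fun x => ENNReal.ofReal (u x)))
      = ∫ x, max (u x) 0 * ψ x ∂ρ := by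
  have hf : AEMeasurable (fun x => (u x).toNNReal) ρ :=
    measurable_real_toNNReal.comp_aemeasurable hu.aemeasurable
  rw [show (fun x => ENNReal.ofReal (u x)) = fun x => (((u x).toNNReal : ℝ≥0) : ℝ≥0∞) from rfl,
    integral_withDensity_eq_integral_smul₀ hf ψ]
  refine integral_congr_ae (Filter.Eventually.of_forall fun x => ?_)
  simp only [NNReal.smul_def, smul_eq_mul, Real.coe_toNNReal']

lemma aux_intmul {ν : Measure α} {w ψ : α → ℝ} (hw : Integrable w ν)
    (hψ : AEStronglyMeasurable ψ ν) (C : ℝ) (hC : ∀ x, |ψ x| ≤ C) :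
    Integrable (fun y => max (w y) 0 * ψ y) ν := by
  refine Integrable.mono' (hw.abs.const_mul C)
    (((hw.aestronglyMeasurable.aemeasurable.max aemeasurable_const).mul hψ.aemeasurable).aestronglyMeasurable)
    (Filter.Eventually.of_forall fun y => ?_)
  have h1 : |max (w y) 0| ≤ |w y| := by
    rw [abs_of_nonneg (le_max_right _ _)]
    exact max_le (le_abs_self _) (abs_nonneg _)
  calc ‖max (w y) 0 * ψ y‖ = |max (w y) 0| * |ψ y| := abs_mul _ _
    _ ≤ |w y| * C := mul_le_mul h1 (hC y) (abs_nonneg _) (abs_nonneg _)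
    _ = C * |w y| := mul_comm _ _

lemma aux_uniq (ρ σ : Measure α) [SigmaFinite ρ] [IsFiniteMeasure σ]
    (hsing : σ ⟂ₘ ρ) (u v : α → ℝ) (hu : AEMeasurable u ρ) (hv : AEMeasurable v σ)
    (hvi : ∫⁻ y, ENNReal.ofReal (v y) ∂σ ≠ ⊤)
    (heq : ρ.withDensity (fun y => ENNReal.ofReal (u y))
        + σ.withDensity (fun y => ENNReal.ofReal (v y))
      = ρ.withDensity (fun y => ENNReal.ofReal (-(u y)))
        + σ.withDensity (fun y => ENNReal.ofReal (-(v y)))) :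
    (∀ᵐ y ∂ρ, u y = 0) ∧ ∀ᵐ y ∂σ, v y = 0 := by
  have hu1 : AEMeasurable (fun y => ENNReal.ofReal (u y)) ρ :=
    ENNReal.measurable_ofReal.comp_aemeasurable hu
  have hu2 : AEMeasurable (fun y => ENNReal.ofReal (-(u y))) ρ :=
    ENNReal.measurable_ofReal.comp_aemeasurable hu.neg
  have hv1 : AEMeasurable (fun y => ENNReal.ofReal (v y)) σ :=
    ENNReal.measurable_ofReal.comp_aemeasurable hv
  have hv2 : AEMeasurable (fun y => ENNReal.ofReal (-(v y))) σ :=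
    ENNReal.measurable_ofReal.comp_aemeasurable hv.neg
  have hs1 : σ.withDensity (fun y => ENNReal.ofReal (v y)) ⟂ₘ ρ :=
    (hsing.mono_ac (withDensity_absolutelyContinuous _ _) Measure.AbsolutelyContinuous.rfl)
  have hs2 : σ.withDensity (fun y => ENNReal.ofReal (-(v y))) ⟂ₘ ρ :=
    (hsing.mono_ac (withDensity_absolutelyContinuous _ _) Measure.AbsolutelyContinuous.rfl)
  set Θ : Measure α := ρ.withDensity (fun y => ENNReal.ofReal (u y))
        + σ.withDensity (fun y => ENNReal.ofReal (v y)) with hΘ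
  have hadd1 : Θ = σ.withDensity (fun y => ENNReal.ofReal (v y))
      + ρ.withDensity (fun y => ENNReal.ofReal (u y)) := by rw [hΘ, add_comm]
  have hadd2 : Θ = σ.withDensity (fun y => ENNReal.ofReal (-(v y)))
      + ρ.withDensity (fun y => ENNReal.ofReal (-(u y))) := heq.trans (add_comm _ _)
  have E1 := Measure.eq_withDensity_rnDeriv₀ hu1 hs1 hadd1
  have E2 := Measure.eq_withDensity_rnDeriv₀ hu2 hs2 hadd2
  have hρeq : ρ.withDensity (fun y => ENNReal.ofReal (u y))
      = ρ.withDensity (fun y => ENNReal.ofReal (-(u y))) := E1.trans E2.symm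
  have hueq : (fun y => ENNReal.ofReal (u y)) =ᵐ[ρ] (fun y => ENNReal.ofReal (-(u y))) :=
    (withDensity_eq_iff_of_sigmaFinite hu1 hu2).1 hρeq
  -- singular parts
  have hadd1' : Θ = σ.withDensity (fun y => ENNReal.ofReal (v y))
      + ρ.withDensity (hu1.mk _) := by
    rw [hadd1, withDensity_congr_ae hu1.ae_eq_mk]
  have hadd2' : Θ = σ.withDensity (fun y => ENNReal.ofReal (-(v y)))
      + ρ.withDensity (hu2.mk _) := by
    rw [hadd2, withDensity_congr_ae hu2.ae_eq_mk]
  have E3 := Measure.eq_singularPart hu1.measurable_mk hs1 hadd1'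
  have E4 := Measure.eq_singularPart hu2.measurable_mk hs2 hadd2'
  have hσeq : σ.withDensity (fun y => ENNReal.ofReal (v y))
      = σ.withDensity (fun y => ENNReal.ofReal (-(v y))) := E3.trans E4.symm
  have hveq : (fun y => ENNReal.ofReal (v y)) =ᵐ[σ] (fun y => ENNReal.ofReal (-(v y))) :=
    (withDensity_eq_iff hv1 hv2 hvi).1 hσeq
  constructor
  · filter_upwards [hueq] with y hy
    rcases le_total (u y) 0 with h | h
    · have h2 : ENNReal.ofReal (-(u y)) = 0 := by
        rw [← hy]; exact ENNReal.ofReal_eq_zero.2 h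
      have := ENNReal.ofReal_eq_zero.1 h2
      linarith
    · have h2 : ENNReal.ofReal (u y) = 0 := by
        rw [hy]; exact ENNReal.ofReal_eq_zero.2 (by linarith)
      have := ENNReal.ofReal_eq_zero.1 h2
      linarith
  · filter_upwards [hveq] with y hy
    rcases le_total (v y) 0 with h | h
    · have h2 : ENNReal.ofReal (-(v y)) = 0 := by
        rw [← hy]; exact ENNReal.ofReal_eq_zero.2 h
      have := ENNReal.ofReal_eq_zero.1 h2
      linarith
    · have h2 : ENNReal.ofReal (v y) = 0 := by
        rw [hy]; exact ENNReal.ofReal_eq_zero.2 (by linarith)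
      have := ENNReal.ofReal_eq_zero.1 h2
      linarith

end Aux

lemma aux_ext {n : ℕ} {K : Set (EuclideanSpace ℝ (Fin n))} (hK : IsCompact K)
    (ν₁ ν₂ : Measure (EuclideanSpace ℝ (Fin n))) [IsFiniteMeasure ν₁] [IsFiniteMeasure ν₂]
    (h₁ : ν₁ Kᶜ = 0) (h₂ : ν₂ Kᶜ = 0)
    (h : ∀ ψ : EuclideanSpace ℝ (Fin n) → ℝ, Continuous ψ → HasCompactSupport ψ →
      ∫ x, ψ x ∂ν₁ = ∫ x, ψ x ∂ν₂) : ν₁ = ν₂ := by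
  obtain ⟨χ, hχ1, -, hχc, hχ01⟩ :=
    exists_continuous_one_zero_of_isCompact hK isClosed_empty (disjoint_bot_right)
  apply ext_of_forall_lintegral_eq_of_IsFiniteMeasure
  intro f
  have key : ∀ (ν : Measure (EuclideanSpace ℝ (Fin n))), IsFiniteMeasure ν → ν Kᶜ = 0 →
      ∫⁻ x, f x ∂ν = ENNReal.ofReal (∫ x, χ x * (f x : ℝ) ∂ν) := by
    intro ν hνf hν0
    have hae : ∀ᵐ x ∂ν, x ∈ K := by
      rw [MeasureTheory.ae_iff]
      exact hν0
    have h1 : ∫⁻ x, (f x : ℝ≥0∞) ∂ν = ∫⁻ x, ENNReal.ofReal (χ x * (f x : ℝ)) ∂ν := by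
      refine lintegral_congr_ae ?_
      filter_upwards [hae] with x hx
      rw [hχ1 hx, Pi.one_apply, one_mul, ENNReal.ofReal_coe_nnreal]
    rw [h1, ← ofReal_integral_eq_lintegral_ofReal]
    · exact (χ.continuous.mul (NNReal.continuous_coe.comp f.continuous)).integrable_of_hasCompactSupport
        (hχc.mul_right)
    · exact Filter.Eventually.of_forall fun x =>
        mul_nonneg (hχ01 x).1 (NNReal.coe_nonneg _)
  rw [key ν₁ ‹_› h₁, key ν₂ ‹_› h₂,
    h (fun x => χ x * (f x : ℝ))
      (χ.continuous.mul (NNReal.continuous_coe.comp f.continuous)) (hχc.mul_right)]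

/-- A nonnegative nontrivial Radon measure φ = φ_ac·dy + φ_s (Lebesgue
decomposition with respect to Lebesgue measure on Ω) solves
μ(M⋆φ − φ) + (a+λ)φ = 0 in the sense of measures if and only if
(i) μ(M⋆φ)(y) + (a(y) − μ + λ)φ_ac(y) = 0 for a.e. y in Ω (Lebesgue), and
(ii) a(y) − μ + λ = 0 for φ_s-a.e. y. -/
theorem stmt1 {n : ℕ} (Ω : Set (EuclideanSpace ℝ (Fin n)))
    (hΩopen : IsOpen Ω) (hΩbdd : Bornology.IsBounded Ω)
    (a : EuclideanSpace ℝ (Fin n) → ℝ) (ha : ContinuousOn a (closure Ω))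
    (μ lam : ℝ) (hμ : 0 < μ)
    (M : EuclideanSpace ℝ (Fin n) → EuclideanSpace ℝ (Fin n) → ℝ)
    (hM : ContinuousOn (fun p : EuclideanSpace ℝ (Fin n) × EuclideanSpace ℝ (Fin n) => M p.1 p.2)
      (closure Ω ×ˢ closure Ω))
    (hMpos : ∀ y ∈ closure Ω, ∀ z ∈ closure Ω, 0 < M y z)
    (hMmass : ∀ z ∈ closure Ω, (∫ y in closure Ω, M y z) = 1)
    (φ : Measure (EuclideanSpace ℝ (Fin n))) [IsFiniteMeasure φ]
    (hφsupp : φ (closure Ω)ᶜ = 0) (hφnt : φ (closure Ω) ≠ 0)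
    (fac : EuclideanSpace ℝ (Fin n) → ℝ)
    (hfac_int : IntegrableOn fac Ω) (hfac_nonneg : ∀ y, 0 ≤ fac y)
    (φs : Measure (EuclideanSpace ℝ (Fin n))) [IsFiniteMeasure φs]
    (hsing : φs ⟂ₘ (volume.restrict Ω))
    (hdecomp : φ = (volume.restrict Ω).withDensity (fun y => ENNReal.ofReal (fac y)) + φs) :
    ((∀ ψ : EuclideanSpace ℝ (Fin n) → ℝ, Continuous ψ → HasCompactSupport ψ →
        (∫ y in Ω, ψ y * (μ * ∫ z, M y z ∂φ)) + (∫ y, ψ y * (a y - μ + lam) ∂φ) = 0)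
      ↔
      ((∀ᵐ y ∂(volume.restrict Ω), μ * (∫ z, M y z ∂φ) + (a y - μ + lam) * fac y = 0) ∧
        (∀ᵐ y ∂φs, a y - μ + lam = 0))) := by
  have hKc : IsCompact (closure Ω) := hΩbdd.isCompact_closure
  have hKm : MeasurableSet (closure Ω) := isClosed_closure.measurableSet
  have hΩm : MeasurableSet Ω := hΩopen.measurableSet
  have hΩK : Ω ⊆ closure Ω := subset_closure
  haveI hLfin : IsFiniteMeasure (volume.restrict Ω) :=
    ⟨by rw [Measure.restrict_apply_univ]; exact hΩbdd.measure_lt_top⟩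
  have hφae : ∀ᵐ y ∂φ, y ∈ closure Ω := by
    rw [MeasureTheory.ae_iff]; exact hφsupp
  have hφres : φ.restrict (closure Ω) = φ := Measure.restrict_eq_self_of_ae_mem hφae
  have hφs_le : φs ≤ φ := by rw [hdecomp]; exact Measure.le_add_left le_rfl
  have hφs0 : φs (closure Ω)ᶜ = 0 :=
    le_antisymm ((Measure.le_iff'.1 hφs_le _).trans hφsupp.le) zero_le
  have hφsae : ∀ᵐ y ∂φs, y ∈ closure Ω := by
    rw [MeasureTheory.ae_iff]; exact hφs0
  have hφsres : φs.restrict (closure Ω) = φs := Measure.restrict_eq_self_of_ae_mem hφsae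
  have hLae : ∀ᵐ y ∂(volume.restrict Ω), y ∈ closure Ω :=
    (ae_restrict_mem hΩm).mono fun y hy => hΩK hy
  obtain ⟨CM, hCM⟩ := (hKc.prod hKc).exists_bound_of_continuousOn hM
  obtain ⟨Ca, hCa⟩ := hKc.exists_bound_of_continuousOn ha
  have hhb : ∀ y ∈ closure Ω, |a y - μ + lam| ≤ Ca + |μ| + |lam| := by
    intro y hy
    have h1 : |a y| ≤ Ca := by rw [← Real.norm_eq_abs]; exact hCa y hy
    rw [abs_le] at h1 ⊢
    constructor <;>
      linarith [h1.1, h1.2, le_abs_self μ, neg_abs_le μ, le_abs_self lam, neg_abs_le lam]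
  have hMy : ∀ y ∈ closure Ω, ContinuousOn (fun z => M y z) (closure Ω) := by
    intro y hy
    exact hM.comp (Continuous.prodMk_right y).continuousOn fun z hz => Set.mk_mem_prod hy hz
  have hMz : ∀ z ∈ closure Ω, ContinuousOn (fun y => M y z) (closure Ω) := by
    intro z hz
    exact hM.comp ((continuous_id.prodMk continuous_const).continuousOn)
      fun y hy => Set.mk_mem_prod hy hz
  have hFcont : ContinuousOn (fun y => ∫ z, M y z ∂φ) (closure Ω) := by
    refine continuousOn_of_dominated (bound := fun _ => CM) ?_ ?_ (integrable_const _) ?_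
    · intro y hy
      rw [← hφres]
      exact (hMy y hy).aestronglyMeasurable hKm
    · intro y hy
      filter_upwards [hφae] with z hz
      exact hCM (y, z) (Set.mk_mem_prod hy hz)
    · filter_upwards [hφae] with z hz
      exact hMz z hz
  have hFb : ∀ y ∈ closure Ω, ‖∫ z, M y z ∂φ‖ ≤ CM * (φ univ).toReal := by
    intro y hy
    refine norm_integral_le_of_norm_le_const ?_
    filter_upwards [hφae] with z hz
    exact hCM (y, z) (Set.mk_mem_prod hy hz)
  have hhK : ContinuousOn (fun y => a y - μ + lam) (closure Ω) :=
    (ha.sub continuousOn_const).add continuousOn_const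
  have hh_L : AEStronglyMeasurable (fun y => a y - μ + lam) (volume.restrict Ω) :=
    (hhK.mono hΩK).aestronglyMeasurable hΩm
  have hh_φs : AEStronglyMeasurable (fun y => a y - μ + lam) φs := by
    rw [← hφsres]; exact hhK.aestronglyMeasurable hKm
  have hF_L : AEStronglyMeasurable (fun y => ∫ z, M y z ∂φ) (volume.restrict Ω) :=
    (hFcont.mono hΩK).aestronglyMeasurable hΩm
  have hfac_sm : AEStronglyMeasurable fac (volume.restrict Ω) := hfac_int.aestronglyMeasurable
  have hh_int_φs : Integrable (fun y => a y - μ + lam) φs := by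
    refine Integrable.mono' (integrable_const (Ca + |μ| + |lam|)) hh_φs ?_
    filter_upwards [hφsae] with y hy
    rw [Real.norm_eq_abs]; exact hhb y hy
  have hμF_int : Integrable (fun y => μ * ∫ z, M y z ∂φ) (volume.restrict Ω) := by
    refine Integrable.mono' (integrable_const (|μ| * (CM * (φ univ).toReal)))
      (hF_L.const_mul μ) ?_
    filter_upwards [hLae] with y hy
    rw [norm_mul, Real.norm_eq_abs (μ)]
    exact mul_le_mul_of_nonneg_left (hFb y hy) (abs_nonneg μ)
  have hhfac_int : Integrable (fun y => (a y - μ + lam) * fac y) (volume.restrict Ω) := by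
    refine Integrable.mono' (hfac_int.abs.const_mul (Ca + |μ| + |lam|))
      (hh_L.mul hfac_sm) ?_
    filter_upwards [hLae] with y hy
    rw [Real.norm_eq_abs, abs_mul]
    exact mul_le_mul_of_nonneg_right (hhb y hy) (abs_nonneg _)
  have hG_int : Integrable
      (fun y => μ * (∫ z, M y z ∂φ) + (a y - μ + lam) * fac y) (volume.restrict Ω) :=
    hμF_int.add hhfac_int
  have hG_sm : AEStronglyMeasurable
      (fun y => μ * (∫ z, M y z ∂φ) + (a y - μ + lam) * fac y) (volume.restrict Ω) :=
    (hF_L.const_mul μ).add (hh_L.mul hfac_sm)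
  -- splitting lemma applied to our decomposition
  have hsplit : ∀ ψ : EuclideanSpace ℝ (Fin n) → ℝ, Continuous ψ → HasCompactSupport ψ →
      (∫ y, ψ y * (a y - μ + lam) ∂φ)
        = (∫ y in Ω, ψ y * (a y - μ + lam) * fac y) + ∫ y, ψ y * (a y - μ + lam) ∂φs := by
    intro ψ hψ hψc
    obtain ⟨Cψ, hCψ⟩ := hψ.bounded_above_of_compact_support hψc
    have hCψ' : ∀ x, |ψ x| ≤ Cψ := fun x => by rw [← Real.norm_eq_abs]; exact hCψ x
    have hCψ0 : 0 ≤ Cψ := (norm_nonneg _).trans (hCψ Classical.ofNonempty)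
    have hbd : ∀ y, y ∈ closure Ω → |ψ y * (a y - μ + lam)| ≤ Cψ * (Ca + |μ| + |lam|) := by
      intro y hy
      rw [abs_mul]
      exact mul_le_mul (hCψ' y) (hhb y hy) (abs_nonneg _) hCψ0
    have h1 : AEStronglyMeasurable (fun y => ψ y * (a y - μ + lam)) (volume.restrict Ω) :=
      hψ.aestronglyMeasurable.mul hh_L
    have h2 : Integrable (fun y => ψ y * (a y - μ + lam)) φs := by
      refine Integrable.mono' (integrable_const (Cψ * (Ca + |μ| + |lam|)))
        (hψ.aestronglyMeasurable.mul hh_φs) ?_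
      filter_upwards [hφsae] with y hy
      rw [Real.norm_eq_abs]; exact hbd y hy
    have h3 := aux_split (volume.restrict Ω) φs fac hfac_int hfac_nonneg
      (fun y => ψ y * (a y - μ + lam)) h1 h2 (Cψ * (Ca + |μ| + |lam|))
      (by filter_upwards [hLae] with y hy; exact hbd y hy)
    rw [← hdecomp] at h3
    exact h3
  -- key reformulation
  have hkey : ∀ ψ : EuclideanSpace ℝ (Fin n) → ℝ, Continuous ψ → HasCompactSupport ψ →
      (∫ y in Ω, ψ y * (μ * ∫ z, M y z ∂φ)) + (∫ y, ψ y * (a y - μ + lam) ∂φ)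
        = (∫ y in Ω, ψ y * (μ * (∫ z, M y z ∂φ) + (a y - μ + lam) * fac y))
          + ∫ y, ψ y * (a y - μ + lam) ∂φs := by
    intro ψ hψ hψc
    obtain ⟨Cψ, hCψ⟩ := hψ.bounded_above_of_compact_support hψc
    rw [hsplit ψ hψ hψc, ← add_assoc]
    congr 1
    have hI1 : Integrable (fun y => ψ y * (μ * ∫ z, M y z ∂φ)) (volume.restrict Ω) :=
      hμF_int.bdd_mul hψ.aestronglyMeasurable (Filter.Eventually.of_forall hCψ)
    have hI2 : Integrable (fun y => ψ y * (a y - μ + lam) * fac y) (volume.restrict Ω) := by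
      have := hhfac_int.bdd_mul hψ.aestronglyMeasurable (Filter.Eventually.of_forall hCψ)
      exact this.congr (Filter.Eventually.of_forall fun y => by ring)
    rw [← integral_add hI1 hI2]
    refine integral_congr_ae (Filter.Eventually.of_forall fun y => ?_)
    ring
  constructor
  · -- forward direction
    intro Hyp
    have H0 : ∀ ψ : EuclideanSpace ℝ (Fin n) → ℝ, Continuous ψ → HasCompactSupport ψ →
        (∫ y in Ω, ψ y * (μ * (∫ z, M y z ∂φ) + (a y - μ + lam) * fac y))
          + (∫ y, ψ y * (a y - μ + lam) ∂φs) = 0 := by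
      intro ψ h1 h2
      rw [← hkey ψ h1 h2]
      exact Hyp ψ h1 h2
    haveI i1 : IsFiniteMeasure ((volume.restrict Ω).withDensity
        (fun y => ENNReal.ofReal (μ * (∫ z, M y z ∂φ) + (a y - μ + lam) * fac y))) :=
      isFiniteMeasure_withDensity_ofReal hG_int.hasFiniteIntegral
    haveI i2 : IsFiniteMeasure (φs.withDensity
        (fun y => ENNReal.ofReal (a y - μ + lam))) :=
      isFiniteMeasure_withDensity_ofReal hh_int_φs.hasFiniteIntegral
    have hGneg_int : Integrable
        (fun y => -(μ * (∫ z, M y z ∂φ) + (a y - μ + lam) * fac y)) (volume.restrict Ω) :=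
      hG_int.neg
    have hhneg_int : Integrable (fun y => -(a y - μ + lam)) φs := hh_int_φs.neg
    haveI i3 : IsFiniteMeasure ((volume.restrict Ω).withDensity
        (fun y => ENNReal.ofReal (-(μ * (∫ z, M y z ∂φ) + (a y - μ + lam) * fac y)))) :=
      isFiniteMeasure_withDensity_ofReal hGneg_int.hasFiniteIntegral
    haveI i4 : IsFiniteMeasure (φs.withDensity
        (fun y => ENNReal.ofReal (-(a y - μ + lam)))) :=
      isFiniteMeasure_withDensity_ofReal hhneg_int.hasFiniteIntegral
    have hL0 : (volume.restrict Ω) (closure Ω)ᶜ = 0 := by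
      rw [Measure.restrict_apply hKm.compl]
      have he : (closure Ω)ᶜ ∩ Ω = ∅ := by
        ext x
        simp only [mem_inter_iff, mem_compl_iff, mem_empty_iff_false, iff_false, not_and]
        intro hx hx2
        exact hx (hΩK hx2)
      rw [he, measure_empty]
    have hνeq : (volume.restrict Ω).withDensity
          (fun y => ENNReal.ofReal (μ * (∫ z, M y z ∂φ) + (a y - μ + lam) * fac y))
        + φs.withDensity (fun y => ENNReal.ofReal (a y - μ + lam))
        = (volume.restrict Ω).withDensity
          (fun y => ENNReal.ofReal (-(μ * (∫ z, M y z ∂φ) + (a y - μ + lam) * fac y)))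
        + φs.withDensity (fun y => ENNReal.ofReal (-(a y - μ + lam))) := by
      refine aux_ext hKc _ _ ?_ ?_ ?_
      · rw [Measure.add_apply, (withDensity_absolutelyContinuous _ _) hL0,
          (withDensity_absolutelyContinuous _ _) hφs0, add_zero]
      · rw [Measure.add_apply, (withDensity_absolutelyContinuous _ _) hL0,
          (withDensity_absolutelyContinuous _ _) hφs0, add_zero]
      · intro ψ hψ hψc
        obtain ⟨Cψ, hCψ⟩ := hψ.bounded_above_of_compact_support hψc
        have hCψ' : ∀ x, |ψ x| ≤ Cψ := fun x => by rw [← Real.norm_eq_abs]; exact hCψ x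
        have ia1 : Integrable ψ ((volume.restrict Ω).withDensity
            (fun y => ENNReal.ofReal (μ * (∫ z, M y z ∂φ) + (a y - μ + lam) * fac y))) :=
          hψ.integrable_of_hasCompactSupport hψc
        have ib1 : Integrable ψ (φs.withDensity (fun y => ENNReal.ofReal (a y - μ + lam))) :=
          hψ.integrable_of_hasCompactSupport hψc
        have ia2 : Integrable ψ ((volume.restrict Ω).withDensity
            (fun y => ENNReal.ofReal (-(μ * (∫ z, M y z ∂φ) + (a y - μ + lam) * fac y)))) :=
          hψ.integrable_of_hasCompactSupport hψc
        have ib2 : Integrable ψ (φs.withDensity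
            (fun y => ENNReal.ofReal (-(a y - μ + lam)))) :=
          hψ.integrable_of_hasCompactSupport hψc
        have hG_sm_neg : AEStronglyMeasurable
            (fun y => -(μ * (∫ z, M y z ∂φ) + (a y - μ + lam) * fac y)) (volume.restrict Ω) :=
          hG_sm.neg
        have hh_sm_neg : AEStronglyMeasurable (fun y => -(a y - μ + lam)) φs := hh_φs.neg
        rw [integral_add_measure ia1 ib1, integral_add_measure ia2 ib2,
          aux_int _ _ hG_sm ψ, aux_int _ _ hh_φs ψ, aux_int _ _ hG_sm_neg ψ,
          aux_int _ _ hh_sm_neg ψ]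
        have d1 : (∫ x, max (μ * (∫ z, M x z ∂φ) + (a x - μ + lam) * fac x) 0 * ψ x
              ∂(volume.restrict Ω))
            - (∫ x, max (-(μ * (∫ z, M x z ∂φ) + (a x - μ + lam) * fac x)) 0 * ψ x
              ∂(volume.restrict Ω))
            = ∫ y in Ω, ψ y * (μ * (∫ z, M y z ∂φ) + (a y - μ + lam) * fac y) := by
          rw [← integral_sub (aux_intmul hG_int hψ.aestronglyMeasurable Cψ hCψ')
            (aux_intmul hGneg_int hψ.aestronglyMeasurable Cψ hCψ')]
          refine integral_congr_ae (Filter.Eventually.of_forall fun y => ?_)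
          show max (μ * (∫ z, M y z ∂φ) + (a y - μ + lam) * fac y) 0 * ψ y
            - max (-(μ * (∫ z, M y z ∂φ) + (a y - μ + lam) * fac y)) 0 * ψ y
            = ψ y * (μ * (∫ z, M y z ∂φ) + (a y - μ + lam) * fac y)
          rw [← sub_mul, max_zero_sub_max_neg_zero_eq_self, mul_comm]
        have d2 : (∫ x, max (a x - μ + lam) 0 * ψ x ∂φs)
            - (∫ x, max (-(a x - μ + lam)) 0 * ψ x ∂φs)
            = ∫ y, ψ y * (a y - μ + lam) ∂φs := by
          rw [← integral_sub (aux_intmul hh_int_φs hψ.aestronglyMeasurable Cψ hCψ')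
            (aux_intmul hhneg_int hψ.aestronglyMeasurable Cψ hCψ')]
          refine integral_congr_ae (Filter.Eventually.of_forall fun y => ?_)
          show max (a y - μ + lam) 0 * ψ y - max (-(a y - μ + lam)) 0 * ψ y
            = ψ y * (a y - μ + lam)
          rw [← sub_mul, max_zero_sub_max_neg_zero_eq_self, mul_comm]
        have h0 := H0 ψ hψ hψc
        linarith
    have hvi : ∫⁻ y, ENNReal.ofReal (a y - μ + lam) ∂φs ≠ ⊤ := by
      have hb : ∫⁻ y, (‖a y - μ + lam‖₊ : ℝ≥0∞) ∂φs < ⊤ := hh_int_φs.hasFiniteIntegral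
      refine ne_of_lt (lt_of_le_of_lt ?_ hb)
      refine lintegral_mono fun y => ?_
      rw [← enorm_eq_nnnorm, ← ofReal_norm, Real.norm_eq_abs]
      exact ENNReal.ofReal_le_ofReal (le_abs_self _)
    have hfin := aux_uniq (volume.restrict Ω) φs hsing
      (fun y => μ * (∫ z, M y z ∂φ) + (a y - μ + lam) * fac y)
      (fun y => a y - μ + lam) hG_sm.aemeasurable hh_φs.aemeasurable hvi hνeq
    exact hfin
  · -- reverse direction
    rintro ⟨h1, h2⟩ ψ hψ hψc
    rw [hkey ψ hψ hψc]
    have e2 : ∫ y, ψ y * (a y - μ + lam) ∂φs = 0 := by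
      have hh : (fun y => ψ y * (a y - μ + lam)) =ᵐ[φs] fun _ => (0 : ℝ) := by
        filter_upwards [h2] with y hy
        rw [hy, mul_zero]
      rw [integral_congr_ae hh, integral_zero]
    have e1 : (∫ y in Ω, ψ y * (μ * (∫ z, M y z ∂φ) + (a y - μ + lam) * fac y)) = 0 := by
      have hh : (fun y => ψ y * (μ * (∫ z, M y z ∂φ) + (a y - μ + lam) * fac y))
          =ᵐ[volume.restrict Ω] fun _ => (0 : ℝ) := by
        filter_upwards [h1] with y hy
        rw [hy, mul_zero]
      rw [integral_congr_ae hh, integral_zero]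
    rw [e1, e2, add_zero]
end

section
/- Suppose φ = φ_ac·dy + φ_s is a nonnegative nontrivial measure solution of μ(M⋆φ − φ) + (a(y)+λ)φ = 0 with λ = −(sup a − μ). If 1/(sup a − a(y)) ∉ L¹(Ω), then no such solution exists: indeed φ_ac(y) = μ(M⋆φ)(y)/(sup a − a(y)) ≥ μ m₀ (∫φ)/(sup a − a(y)), contradicting φ_ac ∈ L¹(Ω). -/
open MeasureTheory Set
open scoped NNReal ENNReal

/-- If 1/(sup a − a) ∉ L¹(Ω), then there is no nonnegative nontrivial measure
solution φ = φ_ac·dy + φ_s of μ(M⋆φ − φ) + (a+λ)φ = 0 with λ = −(sup a − μ):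
assuming such a solution exists leads to a contradiction, since then
φ_ac(y) = μ(M⋆φ)(y)/(sup a − a(y)) ≥ μ m₀ (∫φ)/(sup a − a(y)) would fail to be in L¹(Ω). -/
theorem stmt2 {n : ℕ} (Ω : Set (EuclideanSpace ℝ (Fin n)))
    (hΩopen : IsOpen Ω) (hΩbdd : Bornology.IsBounded Ω)
    (h0 : (0 : EuclideanSpace ℝ (Fin n)) ∈ Ω)
    (a : EuclideanSpace ℝ (Fin n) → ℝ) (ha : ContinuousOn a (closure Ω))
    (ha_nonconst : ∃ y ∈ closure Ω, a y ≠ a 0)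
    (ha_max : ∀ y ∈ closure Ω, a y ≤ a 0)
    (μ : ℝ) (hμ : 0 < μ)
    (M : EuclideanSpace ℝ (Fin n) → EuclideanSpace ℝ (Fin n) → ℝ)
    (hM : ContinuousOn (fun p : EuclideanSpace ℝ (Fin n) × EuclideanSpace ℝ (Fin n) => M p.1 p.2)
      (closure Ω ×ˢ closure Ω))
    (m₀ : ℝ) (hm₀ : 0 < m₀)
    (hMlow : ∀ y ∈ closure Ω, ∀ z ∈ closure Ω, m₀ ≤ M y z)
    (hnotL1 : ¬ IntegrableOn (fun y => 1 / (a 0 - a y)) Ω)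
    (φ : Measure (EuclideanSpace ℝ (Fin n))) [IsFiniteMeasure φ]
    (hφsupp : φ (closure Ω)ᶜ = 0) (hφnt : 0 < φ (closure Ω))
    (fac : EuclideanSpace ℝ (Fin n) → ℝ)
    (hfac_int : IntegrableOn fac Ω) (hfac_nonneg : ∀ y, 0 ≤ fac y)
    (φs : Measure (EuclideanSpace ℝ (Fin n))) [IsFiniteMeasure φs]
    (hsing : φs ⟂ₘ (volume.restrict Ω))
    (hdecomp : φ = (volume.restrict Ω).withDensity (fun y => ENNReal.ofReal (fac y)) + φs)
    (hsol : ∀ ψ : EuclideanSpace ℝ (Fin n) → ℝ, Continuous ψ → HasCompactSupport ψ →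
      (∫ y in Ω, ψ y * (μ * ∫ z, M y z ∂φ)) +
        (∫ y, ψ y * (a y - μ + (-(a 0 - μ))) ∂φ) = 0) :
    False := by
  have hKcl : IsClosed (closure Ω) := isClosed_closure
  have hK : IsCompact (closure Ω) := hΩbdd.isCompact_closure
  -- Tietze extension of a
  obtain ⟨aext, haext⟩ : ∃ g : C(EuclideanSpace ℝ (Fin n), ℝ), ∀ y ∈ closure Ω, g y = a y := by
    obtain ⟨g, hg⟩ := ContinuousMap.exists_restrict_eq hKcl ⟨(closure Ω).restrict a, ha.restrict⟩
    exact ⟨g, fun y hy => congrFun (congrArg DFunLike.coe hg) ⟨y, hy⟩⟩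
  -- Tietze extension of M
  obtain ⟨Mext, hMext⟩ : ∃ g : C(EuclideanSpace ℝ (Fin n) × EuclideanSpace ℝ (Fin n), ℝ),
      ∀ p ∈ closure Ω ×ˢ closure Ω, g p = M p.1 p.2 := by
    obtain ⟨g, hg⟩ := ContinuousMap.exists_restrict_eq (hKcl.prod hKcl)
      ⟨(closure Ω ×ˢ closure Ω).restrict (fun p => M p.1 p.2), hM.restrict⟩
    exact ⟨g, fun p hp => congrFun (congrArg DFunLike.coe hg) ⟨p, hp⟩⟩
  have haeK : ∀ᵐ y ∂φ, y ∈ closure Ω := by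
    rw [ae_iff]; exact hφsupp
  -- bound for Mext on K × K
  obtain ⟨CM, hCM⟩ : ∃ C, ∀ p ∈ closure Ω ×ˢ closure Ω, ‖Mext p‖ ≤ C :=
    (hK.prod hK).exists_bound_of_continuousOn Mext.continuous.continuousOn
  -- integrability of z ↦ Mext (y, z)
  have hMint : ∀ y ∈ closure Ω, Integrable (fun z => Mext (y, z)) φ := by
    intro y hy
    refine Integrable.mono' (integrable_const CM)
      (Mext.continuous.comp (Continuous.prodMk_right y)).aestronglyMeasurable ?_
    filter_upwards [haeK] with z hz
    exact hCM (y, z) ⟨hy, hz⟩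
  -- the convolution-type function
  set G : EuclideanSpace ℝ (Fin n) → ℝ := fun y => ∫ z, Mext (y, z) ∂φ with hGdef
  have hGmeas : StronglyMeasurable G :=
    Mext.continuous.stronglyMeasurable.integral_prod_right'
  have hφuniv : φ Set.univ = φ (closure Ω) := by
    have : φ (closure Ω) + φ (closure Ω)ᶜ = φ Set.univ :=
      measure_add_measure_compl (isClosed_closure (s := Ω)).measurableSet
    rw [hφsupp, add_zero] at this
    exact this.symm
  have hφpos : 0 < (φ Set.univ).toReal :=
    ENNReal.toReal_pos (by rw [hφuniv]; exact hφnt.ne') (measure_ne_top φ _)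
  have hGlow : ∀ y ∈ closure Ω, m₀ * (φ Set.univ).toReal ≤ G y := by
    intro y hy
    have : ∫ z, m₀ ∂φ ≤ ∫ z, Mext (y, z) ∂φ := by
      refine integral_mono_ae (integrable_const m₀) (hMint y hy) ?_
      filter_upwards [haeK] with z hz
      rw [hMext (y, z) ⟨hy, hz⟩]
      exact hMlow y hy z hz
    rw [integral_const, smul_eq_mul, mul_comm] at this; exact this
  have hGup : ∀ y ∈ closure Ω, G y ≤ CM * (φ Set.univ).toReal := by
    intro y hy
    have : ∫ z, Mext (y, z) ∂φ ≤ ∫ z, CM ∂φ := by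
      refine integral_mono_ae (hMint y hy) (integrable_const CM) ?_
      filter_upwards [haeK] with z hz
      exact (le_abs_self _).trans (hCM (y, z) ⟨hy, hz⟩)
    rw [integral_const, smul_eq_mul, mul_comm] at this; exact this
  -- the two densities
  set b : EuclideanSpace ℝ (Fin n) → ℝ≥0 := fun y => (a 0 - aext y).toNNReal with hbdef
  have hbmeas : Measurable b :=
    (continuous_real_toNNReal.comp (continuous_const.sub aext.continuous)).measurable
  set h : EuclideanSpace ℝ (Fin n) → ℝ≥0 := fun y => (μ * G y).toNNReal with hhdef
  have hhmeas : Measurable h := (measurable_const.mul hGmeas.measurable).real_toNNReal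
  set ν₁ : Measure (EuclideanSpace ℝ (Fin n)) := φ.withDensity fun y => (b y : ℝ≥0∞) with hν₁def
  set ν₂ : Measure (EuclideanSpace ℝ (Fin n)) :=
    (volume.restrict Ω).withDensity fun y => (h y : ℝ≥0∞) with hν₂def
  -- finiteness
  obtain ⟨Ca, hCa⟩ : ∃ C, ∀ y ∈ closure Ω, ‖a 0 - aext y‖ ≤ C :=
    hK.exists_bound_of_continuousOn (continuous_const.sub aext.continuous).continuousOn
  have hν₁fin : IsFiniteMeasure ν₁ := by
    constructor
    rw [hν₁def, withDensity_apply _ MeasurableSet.univ, Measure.restrict_univ]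
    calc ∫⁻ y, (b y : ℝ≥0∞) ∂φ ≤ ∫⁻ _, (Ca.toNNReal : ℝ≥0∞) ∂φ := by
          refine lintegral_mono_ae ?_
          filter_upwards [haeK] with y hy
          exact_mod_cast ENNReal.coe_le_coe.2 (Real.toNNReal_le_toNNReal
            ((le_abs_self _).trans (hCa y hy)))
      _ < ⊤ := by
          rw [lintegral_const]
          exact ENNReal.mul_lt_top ENNReal.coe_lt_top (measure_lt_top φ _)
  have hν₂fin : IsFiniteMeasure ν₂ := by
    constructor
    rw [hν₂def, withDensity_apply _ MeasurableSet.univ, Measure.restrict_univ]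
    calc ∫⁻ y, (h y : ℝ≥0∞) ∂(volume.restrict Ω)
        ≤ ∫⁻ _, ((μ * (CM * (φ Set.univ).toReal)).toNNReal : ℝ≥0∞) ∂(volume.restrict Ω) := by
          refine lintegral_mono_ae ?_
          filter_upwards [ae_restrict_mem hΩopen.measurableSet] with y hy
          have := hGup y (subset_closure hy)
          exact ENNReal.coe_le_coe.2 (Real.toNNReal_le_toNNReal
            (by nlinarith))
      _ < ⊤ := by
          rw [lintegral_const, Measure.restrict_apply MeasurableSet.univ, Set.univ_inter]
          exact ENNReal.mul_lt_top ENNReal.coe_lt_top hΩbdd.measure_lt_top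
  haveI := hν₁fin
  haveI := hν₂fin
  -- integrals against compactly supported continuous functions agree
  have hCc : ∀ ψ : EuclideanSpace ℝ (Fin n) → ℝ, Continuous ψ → HasCompactSupport ψ →
      ∫ y, ψ y ∂ν₁ = ∫ y, ψ y ∂ν₂ := by
    intro ψ hψc hψs
    have h1 : ∫ y, ψ y ∂ν₁ = ∫ y, ψ y * (a 0 - a y) ∂φ := by
      rw [hν₁def, integral_withDensity_eq_integral_smul hbmeas ψ]
      refine integral_congr_ae ?_
      filter_upwards [haeK] with y hy
      rw [hbdef]
      simp only [NNReal.smul_def, NNReal.coe_mk]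
      rw [Real.coe_toNNReal _ (by rw [haext y hy]; linarith [ha_max y hy]), haext y hy,
        smul_eq_mul]
      ring
    have h2 : ∫ y, ψ y ∂ν₂ = ∫ y in Ω, ψ y * (μ * ∫ z, M y z ∂φ) := by
      rw [hν₂def, integral_withDensity_eq_integral_smul hhmeas ψ]
      refine setIntegral_congr_fun hΩopen.measurableSet ?_
      intro y hy
      have hyK := subset_closure hy
      have hGpos : 0 ≤ μ * G y :=
        le_trans (by positivity) (mul_le_mul_of_nonneg_left (hGlow y hyK) hμ.le)
      have hGeq : G y = ∫ z, M y z ∂φ := by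
        rw [hGdef]
        refine integral_congr_ae ?_
        filter_upwards [haeK] with z hz
        exact hMext (y, z) ⟨hyK, hz⟩
      simp only [hhdef, NNReal.smul_def, Real.coe_toNNReal _ hGpos]
      rw [hGeq, smul_eq_mul]
      ring
    have h3 := hsol ψ hψc hψs
    have h4 : (∫ y, ψ y * (a y - μ + (-(a 0 - μ))) ∂φ) = - ∫ y, ψ y * (a 0 - a y) ∂φ := by
      rw [← integral_neg]
      refine integral_congr_ae (Filter.Eventually.of_forall fun y => ?_)
      ring
    rw [h4] at h3
    rw [h1, h2]
    linarith
  -- now deduce equality of the two measures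
  have hνeq : ν₁ = ν₂ := by
    obtain ⟨R, hR⟩ := hK.isBounded.subset_ball (0 : EuclideanSpace ℝ (Fin n))
    have hcb : IsCompact (closure (Metric.ball (0 : EuclideanSpace ℝ (Fin n)) R)) :=
      (isCompact_closedBall 0 R).of_isClosed_subset isClosed_closure
        Metric.closure_ball_subset_closedBall
    obtain ⟨χ, hχsupp, hχone, hχmem⟩ :=
      exists_tsupport_one_of_isOpen_isClosed Metric.isOpen_ball hcb isClosed_closure hR
    have hχcs : HasCompactSupport χ :=
      hcb.of_isClosed_subset (isClosed_tsupport _) (hχsupp.trans subset_closure)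
    have hν₁null : ν₁ (closure Ω)ᶜ = 0 := by
      rw [hν₁def, withDensity_apply _ isClosed_closure.measurableSet.compl,
        Measure.restrict_eq_zero.mpr hφsupp, lintegral_zero_measure]
    have hν₂null : ν₂ (closure Ω)ᶜ = 0 := by
      rw [hν₂def, withDensity_apply _ isClosed_closure.measurableSet.compl,
        Measure.restrict_eq_zero.mpr, lintegral_zero_measure]
      rw [Measure.restrict_apply isClosed_closure.measurableSet.compl]
      refine measure_mono_null ?_ (measure_empty (μ := volume))
      intro x hx
      exact hx.1 (subset_closure hx.2)
    have haeν₁ : ∀ᵐ y ∂ν₁, y ∈ closure Ω := by rw [ae_iff]; exact hν₁null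
    have haeν₂ : ∀ᵐ y ∂ν₂, y ∈ closure Ω := by rw [ae_iff]; exact hν₂null
    refine ext_of_forall_lintegral_eq_of_IsFiniteMeasure fun f => ?_
    have hfc : Continuous fun y => (f y : ℝ) := NNReal.continuous_coe.comp f.continuous
    have hint : ∀ (ν : Measure (EuclideanSpace ℝ (Fin n))) [IsFiniteMeasure ν],
        Integrable (fun y => (f y : ℝ)) ν := fun ν _ => f.integrable_of_nnreal (μ := ν)
    set ψ : EuclideanSpace ℝ (Fin n) → ℝ := fun y => χ y * (f y : ℝ) with hψdef
    have hψc : Continuous ψ := χ.continuous.mul hfc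
    have hψcs : HasCompactSupport ψ := hχcs.mul_right
    have key := hCc ψ hψc hψcs
    have e₁ : ∫ y, ψ y ∂ν₁ = ∫ y, (f y : ℝ) ∂ν₁ := by
      refine integral_congr_ae ?_
      filter_upwards [haeν₁] with y hy
      rw [hψdef]; simp [hχone hy]
    have e₂ : ∫ y, ψ y ∂ν₂ = ∫ y, (f y : ℝ) ∂ν₂ := by
      refine integral_congr_ae ?_
      filter_upwards [haeν₂] with y hy
      rw [hψdef]; simp [hχone hy]
    rw [lintegral_coe_eq_integral _ (hint ν₁), lintegral_coe_eq_integral _ (hint ν₂)]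
    rw [← e₁, ← e₂, key]
  rw [hν₁def, hν₂def] at hνeq
  -- Lebesgue decomposition: compare absolutely continuous parts
  set ρ : Measure (EuclideanSpace ℝ (Fin n)) := volume.restrict Ω with hρdef
  have hfacaem : AEMeasurable (fun y => ENNReal.ofReal (fac y)) ρ :=
    ENNReal.measurable_ofReal.comp_aemeasurable hfac_int.aemeasurable
  have hsplit : φ.withDensity (fun y => (b y : ℝ≥0∞))
      = ρ.withDensity ((fun y => ENNReal.ofReal (fac y)) * (fun y => (b y : ℝ≥0∞)))
        + φs.withDensity (fun y => (b y : ℝ≥0∞)) := by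
    rw [hdecomp, withDensity_add_measure,
      withDensity_mul₀ hfacaem (hbmeas.coe_nnreal_ennreal).aemeasurable]
  have hsing' : φs.withDensity (fun y => (b y : ℝ≥0∞)) ⟂ₘ ρ := hsing.withDensity
  obtain ⟨t, htm, ht1, ht2⟩ := hsing'
  have hac : ρ.withDensity ((fun y => ENNReal.ofReal (fac y)) * (fun y => (b y : ℝ≥0∞)))
      = ρ.withDensity (fun y => (h y : ℝ≥0∞)) := by
    ext s hs
    have hms : ∀ (m : Measure (EuclideanSpace ℝ (Fin n))), m tᶜ = 0 → m s = m (s ∩ t) := by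
      intro m hm
      refine le_antisymm ?_ (measure_mono inter_subset_left)
      calc m s = m ((s ∩ t) ∪ (s \ t)) := by rw [Set.inter_union_diff]
        _ ≤ m (s ∩ t) + m (s \ t) := measure_union_le _ _
        _ = m (s ∩ t) := by
            have hz : m (s \ t) = 0 :=
              measure_mono_null (fun x (hx : x ∈ s \ t) => hx.2) hm
            rw [hz, add_zero]
    have e := congrArg (fun m : Measure (EuclideanSpace ℝ (Fin n)) => m (s ∩ t)) hνeq
    rw [hsplit] at e
    simp only [Measure.add_apply] at e
    have hσ : φs.withDensity (fun y => (b y : ℝ≥0∞)) (s ∩ t) = 0 :=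
      measure_mono_null inter_subset_right ht1
    rw [hσ, add_zero] at e
    rw [hms _ ((withDensity_absolutelyContinuous ρ _) ht2),
        hms _ ((withDensity_absolutelyContinuous ρ _) ht2), e]
  have hdens : (fun y => ENNReal.ofReal (fac y) * (b y : ℝ≥0∞)) =ᵐ[ρ]
      (fun y => (h y : ℝ≥0∞)) := by
    have := (withDensity_eq_iff_of_sigmaFinite
      (hfacaem.mul (hbmeas.coe_nnreal_ennreal).aemeasurable)
      (hhmeas.coe_nnreal_ennreal).aemeasurable).mp ?_
    · exact this
    · exact hac
  -- final contradiction
  set c : ℝ := μ * (m₀ * (φ Set.univ).toReal) with hcdef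
  have hc : 0 < c := by positivity
  have hbound : ∀ᵐ y ∂ρ, ‖1 / (a 0 - a y)‖ ≤ fac y / c := by
    filter_upwards [hdens, ae_restrict_mem hΩopen.measurableSet] with y hy hyΩ
    have hyK : y ∈ closure Ω := subset_closure hyΩ
    have hd0 : 0 ≤ a 0 - a y := by linarith [ha_max y hyK]
    have hcG : c ≤ μ * G y := by
      rw [hcdef]
      exact mul_le_mul_of_nonneg_left (hGlow y hyK) hμ.le
    have hby : (b y : ℝ≥0∞) = ENNReal.ofReal (a 0 - a y) := by
      rw [hbdef]; simp only [ENNReal.ofReal]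
      rw [haext y hyK]
    have hhy : (h y : ℝ≥0∞) = ENNReal.ofReal (μ * G y) := by
      rw [hhdef]; simp only [ENNReal.ofReal]
    rw [hby, hhy, ← ENNReal.ofReal_mul (hfac_nonneg y)] at hy
    have hreal : fac y * (a 0 - a y) = μ * G y := by
      have h1 : 0 ≤ fac y * (a 0 - a y) := mul_nonneg (hfac_nonneg y) hd0
      exact (ENNReal.ofReal_eq_ofReal_iff h1 (le_trans hc.le hcG)).mp hy
    have hkey : c ≤ fac y * (a 0 - a y) := by rw [hreal]; exact hcG
    have hdpos : 0 < a 0 - a y := by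
      rcases lt_or_eq_of_le hd0 with h' | h'
      · exact h'
      · exfalso; rw [← h'] at hkey; simp at hkey; linarith
    rw [Real.norm_eq_abs, abs_of_nonneg (by positivity)]
    rw [div_le_div_iff₀ hdpos hc, one_mul]
    nlinarith [hkey]
  have hmeas1 : AEStronglyMeasurable (fun y => 1 / (a 0 - a y)) ρ := by
    have hm : AEStronglyMeasurable (fun y => 1 / (a 0 - aext y)) ρ :=
      ((measurable_const.sub aext.continuous.measurable).const_div 1)
        |>.aestronglyMeasurable
    refine hm.congr ?_
    filter_upwards [ae_restrict_mem hΩopen.measurableSet] with y hyΩ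
    rw [haext y (subset_closure hyΩ)]
  exact hnotL1 (Integrable.mono' (hfac_int.div_const c) hmeas1 hbound)
end

section
/- Let ε > 0 and λ₁^ε < 0, where (λ₁^ε, φ^ε) is the positive Neumann principal eigenpair of −εΔφ − μ(M⋆φ − φ) = (a + λ)φ. Let p be a positive solution to the stationary problem −εΔp − μ(M⋆p − p) = p(a(y) − K⋆p) with Neumann conditions. Then ∫_Ω p(y)dy ≥ (−λ₁^ε)/k_∞, where k_∞ := sup K. -/
open MeasureTheory Set

/-- The Laplacian of `f : ℝⁿ → ℝ`, as the trace of the second derivative. -/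
noncomputable def lap {n : ℕ} (f : EuclideanSpace ℝ (Fin n) → ℝ)
    (y : EuclideanSpace ℝ (Fin n)) : ℝ :=
  ∑ i : Fin n, iteratedFDeriv ℝ 2 f y (fun _ => EuclideanSpace.single i 1)

namespace Stmt8Aux

variable {n : ℕ}

local notation "E" => EuclideanSpace ℝ (Fin n)

/-- second directional derivative -/
noncomputable def d2 (f : E → ℝ) (y v : E) : ℝ :=
  fderiv ℝ (fun x => fderiv ℝ f x v) y v

lemma hasDerivAt_comp_line {f : E → ℝ} (hf : Differentiable ℝ f) (y v : E) (t : ℝ) :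
    HasDerivAt (fun s : ℝ => f (y + s • v)) (fderiv ℝ f (y + t • v) v) t := by
  have hline : HasDerivAt (fun s : ℝ => y + s • v) v t := by
    simpa using ((hasDerivAt_id t).smul_const v).const_add y
  exact (hf (y + t • v)).hasFDerivAt.comp_hasDerivAt t hline

lemma d2_nonneg_of_isLocalMin {f : E → ℝ} (hf : ContDiff ℝ 2 f) {y : E}
    (hmin : IsLocalMin f y) (v : E) : 0 ≤ d2 f y v := by
  by_contra hneg
  push_neg at hneg
  have hfd : Differentiable ℝ f := hf.differentiable (by norm_num)
  have hC1 : ContDiff ℝ 1 (fun x => fderiv ℝ f x v) :=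
    (hf.fderiv_right (le_refl _)).clm_apply contDiff_const
  set g : ℝ → ℝ := fun t => f (y + t • v) with hg_def
  set h : ℝ → ℝ := fun t => fderiv ℝ f (y + t • v) v with hh_def
  have hg : ∀ t, HasDerivAt g (h t) t := fun t => hasDerivAt_comp_line hfd y v t
  have hlocal : IsLocalMin g 0 := by
    have hcont : ContinuousAt (fun t : ℝ => y + t • v) 0 :=
      (continuous_const.add (continuous_id.smul continuous_const)).continuousAt
    have h0 : (fun t : ℝ => y + t • v) 0 = y := by simp
    have := hcont.tendsto
    simp only [h0] at this
    have hev : ∀ᶠ t in nhds (0:ℝ), f y ≤ f (y + t • v) := this.eventually hmin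
    have : g 0 = f y := by simp [hg_def]
    unfold IsLocalMin IsMinFilter
    rw [this]
    exact hev
  have hd0 : h 0 = 0 := by
    have := hlocal.deriv_eq_zero
    rw [(hg 0).deriv] at this
    exact this
  have hh : HasDerivAt h (d2 f y v) 0 := by
    have := hasDerivAt_comp_line (f := fun x => fderiv ℝ f x v)
      (hC1.differentiable one_ne_zero) y v 0
    simpa [hh_def, d2] using this
  rw [hasDerivAt_iff_tendsto_slope] at hh
  have hh' : Filter.Tendsto (slope h 0) (nhdsWithin 0 (Ioi 0)) (nhds (d2 f y v)) :=
    hh.mono_left (nhdsWithin_mono _ (fun x hx => ne_of_gt hx))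
  have hev : ∀ᶠ t in nhdsWithin (0:ℝ) (Ioi 0), h t < 0 := by
    have h1 : ∀ᶠ t in nhdsWithin (0:ℝ) (Ioi 0), slope h 0 t < 0 :=
      hh'.eventually_lt_const hneg
    filter_upwards [h1, self_mem_nhdsWithin] with t ht htpos
    have : slope h 0 t = h t / t := by simp [slope_def_field, hd0]
    rw [this] at ht
    exact (div_neg_iff.mp ht).resolve_left (fun ⟨_, h2⟩ => absurd htpos (not_lt.mpr h2.le) ) |>.1
  obtain ⟨t₀, ht₀, hsub⟩ := (mem_nhdsGT_iff_exists_Ioo_subset).mp hev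
  have ht₀pos : (0:ℝ) < t₀ := ht₀
  have hanti : StrictAntiOn g (Icc 0 (t₀/2)) := by
    apply strictAntiOn_of_deriv_neg (convex_Icc _ _)
    · exact (hfd.continuous.comp ((continuous_const.add (continuous_id.smul continuous_const)))).continuousOn
    · intro x hx
      rw [interior_Icc] at hx
      rw [(hg x).deriv]
      exact hsub ⟨hx.1, lt_trans hx.2 (by linarith)⟩
  have hloc' : ∀ᶠ t in nhdsWithin (0:ℝ) (Ioi 0), g 0 ≤ g t :=
    hlocal.filter_mono nhdsWithin_le_nhds
  have hmem : Ioo (0:ℝ) (t₀/2) ∈ nhdsWithin (0:ℝ) (Ioi 0) :=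
    Ioo_mem_nhdsGT_of_mem ⟨le_refl _, by linarith⟩
  have hmem' : ∀ᶠ t in nhdsWithin (0:ℝ) (Ioi 0), t ∈ Ioo (0:ℝ) (t₀/2) :=
    Filter.eventually_iff.mpr (by exact hmem)
  obtain ⟨t, htle, htI⟩ := (hloc'.and hmem').exists
  have : g t < g 0 := hanti ⟨le_refl 0, by linarith [htI.1, htI.2]⟩ ⟨htI.1.le, htI.2.le⟩ htI.1
  linarith

lemma lap_eq_sum_d2 {f : E → ℝ} (hf : ContDiff ℝ 2 f) (y : E) :
    lap f y = ∑ i, d2 f y (EuclideanSpace.single i 1) := by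
  unfold lap d2
  refine Finset.sum_congr rfl fun i _ => ?_
  rw [iteratedFDeriv_two_apply]
  have hdiff : DifferentiableAt ℝ (fderiv ℝ f) y :=
    ((hf.fderiv_right (le_refl _)).differentiable one_ne_zero).differentiableAt
  rw [fderiv_clm_apply hdiff (differentiableAt_const _)]
  simp

lemma lap_nonneg_of_isLocalMin {f : E → ℝ} (hf : ContDiff ℝ 2 f) {y : E}
    (hmin : IsLocalMin f y) : 0 ≤ lap f y := by
  rw [lap_eq_sum_d2 hf]
  exact Finset.sum_nonneg fun i _ => d2_nonneg_of_isLocalMin hf hmin _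

lemma lap_sub_const_mul {f g : E → ℝ} (hf : ContDiff ℝ 2 f) (hg : ContDiff ℝ 2 g)
    (c : ℝ) (y : E) :
    lap (fun x => f x - c * g x) y = lap f y - c * lap g y := by
  unfold lap
  rw [Finset.mul_sum, ← Finset.sum_sub_distrib]
  refine Finset.sum_congr rfl fun i _ => ?_
  have heq : (fun x => f x - c * g x) = f + (-c) • g := by
    funext x; simp [Pi.add_apply, Pi.smul_apply, smul_eq_mul]; ring
  have hg' : ContDiff ℝ 2 ((-c) • g) := hg.const_smul (-c)
  rw [heq, iteratedFDeriv_add_apply hf.contDiffAt hg'.contDiffAt, iteratedFDeriv_const_smul_apply hg.contDiffAt]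
  simp [smul_eq_mul]; ring

lemma sumsq (x z : E) : ∑ j, (x j - z j)^2 = ‖x - z‖^2 := by
  rw [EuclideanSpace.norm_eq, Real.sq_sqrt (by positivity)]
  refine Finset.sum_congr rfl fun j _ => ?_
  simp [Real.norm_eq_abs, sq_abs]

lemma quad_contDiff (A r : ℝ) (z : E) :
    ContDiff ℝ 2 (fun x : E => A * (r^2 - ∑ j, (x j - z j)^2)) := by
  apply ContDiff.mul contDiff_const
  apply ContDiff.sub contDiff_const
  exact ContDiff.sum fun j _ => by
    have h : ContDiff ℝ 2 (fun x : E => (EuclideanSpace.proj (𝕜 := ℝ) j x - z j)^2) :=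
      ((EuclideanSpace.proj (𝕜 := ℝ) j).contDiff.sub contDiff_const).pow 2
    exact h

lemma quad_fderiv (A r : ℝ) (z : E) (x : E) :
    HasFDerivAt (fun x : E => A * (r^2 - ∑ j, (x j - z j)^2))
      (A • (-(∑ j, (2*(x j - z j)) • (EuclideanSpace.proj j : E →L[ℝ] ℝ)))) x := by
  have h1 : ∀ j, HasFDerivAt (fun y : E => (y j - z j)^2)
      ((2*(x j - z j)) • (EuclideanSpace.proj (𝕜 := ℝ) j)) x := by
    intro j
    have hb : HasFDerivAt (fun y : E => y j - z j) (EuclideanSpace.proj (𝕜 := ℝ) j) x :=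
      (EuclideanSpace.proj (𝕜 := ℝ) j).hasFDerivAt.sub_const _
    have := hb.fun_mul hb
    simpa [pow_two, two_mul, add_smul] using this
  have hq : HasFDerivAt (fun y : E => ∑ j, (y j - z j)^2)
      (∑ j, (2*(x j - z j)) • (EuclideanSpace.proj (𝕜 := ℝ) j : E →L[ℝ] ℝ)) x :=
    HasFDerivAt.fun_sum (fun j _ => h1 j)
  exact (hq.const_sub (r^2)).const_mul A

lemma quad_fderiv_apply (A r : ℝ) (z : E) (x : E) (i : Fin n) :
    fderiv ℝ (fun x : E => A * (r^2 - ∑ j, (x j - z j)^2)) x (EuclideanSpace.single i 1)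
      = -(2*A*(x i - z i)) := by
  rw [(quad_fderiv A r z x).fderiv]
  simp [ContinuousLinearMap.sum_apply, EuclideanSpace.single_apply, Finset.sum_ite_eq',
    mul_comm, mul_ite]
  ring

lemma lap_quad (A r : ℝ) (z : E) (y : E) :
    lap (fun x : E => A * (r^2 - ∑ j, (x j - z j)^2)) y = -(2*n*A) := by
  rw [lap_eq_sum_d2 (quad_contDiff A r z)]
  have : ∀ i : Fin n, d2 (fun x : E => A * (r^2 - ∑ j, (x j - z j)^2)) y
      (EuclideanSpace.single i 1) = -(2*A) := by
    intro i
    unfold d2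
    have heqf : (fun x : E => fderiv ℝ (fun x : E => A * (r^2 - ∑ j, (x j - z j)^2)) x
        (EuclideanSpace.single i 1)) = fun x : E => -(2*A*(x i - z i)) := by
      funext x; exact quad_fderiv_apply A r z x i
    rw [heqf]
    have hF : HasFDerivAt (fun x : E => -(2*A*(x i - z i)))
        ((-(2*A)) • (EuclideanSpace.proj (𝕜 := ℝ) i : E →L[ℝ] ℝ)) y := by
      have hb : HasFDerivAt (fun y : E => y i - z i) (EuclideanSpace.proj (𝕜 := ℝ) i) y :=
        (EuclideanSpace.proj (𝕜 := ℝ) i).hasFDerivAt.sub_const _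
      have := (hb.const_mul (2*A)).fun_neg
      simpa [neg_smul] using this
    rw [hF.fderiv]
    simp [EuclideanSpace.single_apply]
  rw [Finset.sum_congr rfl (fun i _ => this i)]
  simp [Finset.sum_const]
  ring

end Stmt8Aux

set_option maxHeartbeats 1600000 in
/-- Let (λ₁^ε, φ^ε) be the positive Neumann principal eigenpair of
−εΔφ − μ(M⋆φ − φ) = (a + λ)φ with λ₁^ε < 0, and let p be a positive Neumann solution of
the stationary problem −εΔp − μ(M⋆p − p) = p(a − K⋆p). Then ∫_Ω p ≥ (−λ₁^ε)/k_∞,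
where k_∞ = sup K. -/
theorem stmt8 {n : ℕ} (Ω : Set (EuclideanSpace ℝ (Fin n)))
    (hΩopen : IsOpen Ω) (hΩbdd : Bornology.IsBounded Ω) (hΩne : Ω.Nonempty)
    (hC3 : ∃ R > (0:ℝ), ContDiffOn ℝ 3 (fun y => Metric.infDist y (frontier Ω))
      {y ∈ closure Ω | Metric.infDist y (frontier Ω) < R})
    (ν : EuclideanSpace ℝ (Fin n) → EuclideanSpace ℝ (Fin n))
    (hν_unit : ∀ y ∈ frontier Ω, ‖ν y‖ = 1)
    (hν_out : ∀ y ∈ frontier Ω, ∃ r > (0:ℝ), Metric.ball (y - r • ν y) r ⊆ Ω)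
    (a : EuclideanSpace ℝ (Fin n) → ℝ) (ha : ContinuousOn a (closure Ω))
    (μ ε : ℝ) (hμ : 0 < μ) (hε : 0 < ε)
    (M K : EuclideanSpace ℝ (Fin n) → EuclideanSpace ℝ (Fin n) → ℝ)
    (hM : ContinuousOn (fun p : EuclideanSpace ℝ (Fin n) × EuclideanSpace ℝ (Fin n) => M p.1 p.2)
      (closure Ω ×ˢ closure Ω))
    (hMpos : ∀ y ∈ closure Ω, ∀ z ∈ closure Ω, 0 < M y z)
    (hK : ContinuousOn (fun p : EuclideanSpace ℝ (Fin n) × EuclideanSpace ℝ (Fin n) => K p.1 p.2)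
      (closure Ω ×ˢ closure Ω))
    (kinf : ℝ) (hkinf_pos : 0 < kinf)
    (hKpos : ∀ y ∈ closure Ω, ∀ z ∈ closure Ω, 0 < K y z)
    (hKup : ∀ y ∈ closure Ω, ∀ z ∈ closure Ω, K y z ≤ kinf)
    -- the principal eigenpair
    (lam : ℝ) (hlam : lam < 0)
    (φ : EuclideanSpace ℝ (Fin n) → ℝ)
    (hφreg : ContDiff ℝ 2 φ) (hφpos : ∀ y ∈ closure Ω, 0 < φ y)
    (heig : ∀ y ∈ Ω,
      -ε * lap φ y - μ * ((∫ z in closure Ω, M y z * φ z) - φ y) = (a y + lam) * φ y)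
    (hφNeumann : ∀ y ∈ frontier Ω, fderiv ℝ φ y (ν y) = 0)
    -- the stationary solution
    (p : EuclideanSpace ℝ (Fin n) → ℝ)
    (hpreg : ContDiff ℝ 2 p) (hppos : ∀ y ∈ closure Ω, 0 < p y)
    (hpint : IntegrableOn p Ω)
    (heq : ∀ y ∈ Ω,
      -ε * lap p y - μ * ((∫ z in closure Ω, M y z * p z) - p y)
        = p y * (a y - (∫ z in Ω, K y z * p z)))
    (hpNeumann : ∀ y ∈ frontier Ω, fderiv ℝ p y (ν y) = 0) :
    (-lam) / kinf ≤ ∫ y in Ω, p y := by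
  classical
  by_contra hcon
  push_neg at hcon
  set I : ℝ := ∫ y in Ω, p y with hI_def
  have hIlt : kinf * I < -lam := by
    have := (lt_div_iff₀ hkinf_pos).mp hcon
    linarith
  -- basic topology
  have hclos : IsCompact (closure Ω) := hΩbdd.isCompact_closure
  have hclosne : (closure Ω).Nonempty := hΩne.mono subset_closure
  have pcont : Continuous p := hpreg.continuous
  have φcont : Continuous φ := hφreg.continuous
  -- the touching constant α and point y₀
  obtain ⟨y₀, hy₀cl, hy₀min⟩ := hclos.exists_isMinOn hclosne
    (pcont.continuousOn.div φcont.continuousOn (fun y hy => (hφpos y hy).ne'))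
  set α : ℝ := p y₀ / φ y₀ with hα_def
  have hαpos : 0 < α := div_pos (hppos y₀ hy₀cl) (hφpos y₀ hy₀cl)
  set w : EuclideanSpace ℝ (Fin n) → ℝ := fun y => p y - α * φ y with hw_def
  have hw0 : w y₀ = 0 := by
    have hφne : φ y₀ ≠ 0 := (hφpos y₀ hy₀cl).ne'
    simp only [hw_def, hα_def]
    field_simp
    ring
  have hwnn : ∀ y ∈ closure Ω, 0 ≤ w y := by
    intro y hy
    have h1 : α ≤ p y / φ y := hy₀min hy
    have h2 : 0 < φ y := hφpos y hy
    have := (le_div_iff₀ h2).mp h1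
    simp only [hw_def]; linarith
  have hwC2 : ContDiff ℝ 2 w := hpreg.sub (contDiff_const.mul hφreg)
  have hlapw : ∀ y, lap w y = lap p y - α * lap φ y :=
    fun y => Stmt8Aux.lap_sub_const_mul hpreg hφreg α y
  -- p min
  obtain ⟨ym, hymcl, hym⟩ := hclos.exists_isMinOn hclosne pcont.continuousOn
  have hpm : 0 < p ym := hppos ym hymcl
  -- C
  obtain ⟨yM, hyMcl, hyM⟩ := hclos.exists_isMaxOn hclosne
    ((continuousOn_const.sub ha).sub continuousOn_const)
  set C : ℝ := max (μ - a yM - lam) 1 with hC_def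
  have hCpos : (0:ℝ) < C := lt_of_lt_of_le one_pos (le_max_right _ _)
  have hCb : ∀ y ∈ closure Ω, μ - a y - lam ≤ C := fun y hy =>
    le_trans (hyM hy) (le_max_left _ _)
  set c : ℝ := -lam - kinf * I with hc_def
  have hc : 0 < c := by simp only [hc_def]; linarith
  set δ : ℝ := p ym * c with hδ_def
  have hδ : 0 < δ := mul_pos hpm hc
  -- the key differential inequality
  have key : ∀ y ∈ Ω, ε * lap w y ≤ C * w y - δ := by
    intro y hyΩ
    have hycl : y ∈ closure Ω := subset_closure hyΩ
    have hMycont : ContinuousOn (fun z => M y z) (closure Ω) :=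
      hM.comp ((continuous_const.prodMk continuous_id).continuousOn)
        (fun z hz => ⟨hycl, hz⟩)
    have hKycont : ContinuousOn (fun z => K y z) (closure Ω) :=
      hK.comp ((continuous_const.prodMk continuous_id).continuousOn)
        (fun z hz => ⟨hycl, hz⟩)
    have hMp : IntegrableOn (fun z => M y z * p z) (closure Ω) :=
      (hMycont.mul pcont.continuousOn).integrableOn_compact hclos
    have hMφ : IntegrableOn (fun z => M y z * φ z) (closure Ω) :=
      (hMycont.mul φcont.continuousOn).integrableOn_compact hclos
    have hMw : α * (∫ z in closure Ω, M y z * φ z) ≤ ∫ z in closure Ω, M y z * p z := by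
      rw [← MeasureTheory.integral_const_mul]
      apply setIntegral_mono_on (hMφ.const_mul α) hMp measurableSet_closure
      intro z hz
      have h1 := (hMpos y hycl z hz).le
      have h2 := hwnn z hz
      simp only [hw_def] at h2
      nlinarith
    have hKp : (∫ z in Ω, K y z * p z) ≤ kinf * I := by
      have hint1 : IntegrableOn (fun z => K y z * p z) Ω := by
        apply Integrable.mono' (hpint.const_mul kinf)
        · exact ((hKycont.mono subset_closure).mul pcont.continuousOn).aestronglyMeasurable
            hΩopen.measurableSet
        · rw [ae_restrict_iff' hΩopen.measurableSet]
          apply Filter.Eventually.of_forall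
          intro z hz
          have hzc : z ∈ closure Ω := subset_closure hz
          have h1 := hKpos y hycl z hzc
          have h2 := hppos z hzc
          rw [Real.norm_eq_abs, abs_of_nonneg (by positivity)]
          exact mul_le_mul_of_nonneg_right (hKup y hycl z hzc) h2.le
      calc (∫ z in Ω, K y z * p z) ≤ ∫ z in Ω, kinf * p z := by
            apply setIntegral_mono_on hint1 (hpint.const_mul kinf) hΩopen.measurableSet
            intro z hz
            have hzc : z ∈ closure Ω := subset_closure hz
            exact mul_le_mul_of_nonneg_right (hKup y hycl z hzc) (hppos z hzc).le
        _ = kinf * I := by rw [MeasureTheory.integral_const_mul]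
    have e1 := heq y hyΩ
    have e2 := heig y hyΩ
    have keyeq : ε * lap w y =
        -(μ * ((∫ z in closure Ω, M y z * p z) - α * (∫ z in closure Ω, M y z * φ z)))
        + (μ - a y - lam) * (p y - α * φ y)
        + p y * ((∫ z in Ω, K y z * p z) + lam) := by
      rw [hlapw y]
      linear_combination (-1 : ℝ) * e1 + α * e2
    rw [keyeq]
    have t1 : 0 ≤ μ * ((∫ z in closure Ω, M y z * p z)
        - α * (∫ z in closure Ω, M y z * φ z)) :=
      mul_nonneg hμ.le (by linarith)
    have t2 : (μ - a y - lam) * (p y - α * φ y) ≤ C * (p y - α * φ y) := by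
      have := hwnn y hycl
      simp only [hw_def] at this
      exact mul_le_mul_of_nonneg_right (hCb y hycl) this
    have t3 : p y * ((∫ z in Ω, K y z * p z) + lam) ≤ -δ := by
      have h1 : (∫ z in Ω, K y z * p z) + lam ≤ -c := by
        simp only [hc_def]; linarith
      have h2 : p ym ≤ p y := hym hycl
      have h3 : p y * ((∫ z in Ω, K y z * p z) + lam) ≤ p y * (-c) :=
        mul_le_mul_of_nonneg_left h1 (hppos y hycl).le
      have h4 : p ym * c ≤ p y * c := mul_le_mul_of_nonneg_right h2 hc.le
      simp only [hδ_def]; linarith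
    have hwy : w y = p y - α * φ y := rfl
    rw [hwy]
    linarith
  -- case analysis on y₀
  by_cases hy₀Ω : y₀ ∈ Ω
  · -- interior touching point
    have hlmin : IsLocalMin w y₀ := by
      apply Filter.eventually_of_mem (hΩopen.mem_nhds hy₀Ω)
      intro x hx
      rw [hw0]
      exact hwnn x (subset_closure hx)
    have hlap := Stmt8Aux.lap_nonneg_of_isLocalMin hwC2 hlmin
    have := key y₀ hy₀Ω
    rw [hw0] at this
    nlinarith
  · -- boundary touching point
    have hfr : y₀ ∈ frontier Ω := by
      rw [hΩopen.frontier_eq]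
      exact ⟨hy₀cl, hy₀Ω⟩
    obtain ⟨r, hr, hball⟩ := hν_out y₀ hfr
    have hν1 : ‖ν y₀‖ = 1 := hν_unit y₀ hfr
    set z : EuclideanSpace ℝ (Fin n) := y₀ - r • ν y₀ with hz_def
    set A : ℝ := min (δ/(2*C*r^2)) (δ/(8*((n:ℝ)+1)*ε)) with hA_def
    have hApos : 0 < A := lt_min (by positivity) (by positivity)
    set ψ : EuclideanSpace ℝ (Fin n) → ℝ :=
      fun x => A * (r^2 - ∑ j, (x j - z j)^2) with hψ_def
    have hψC2 : ContDiff ℝ 2 ψ := Stmt8Aux.quad_contDiff A r z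
    have hψub : ∀ x, ψ x ≤ A * r^2 := by
      intro x
      have h1 : (0:ℝ) ≤ ∑ j, (x j - z j)^2 := Finset.sum_nonneg fun j _ => sq_nonneg _
      simp only [hψ_def]
      nlinarith
    have hψnorm : ∀ x, ψ x = A * (r^2 - ‖x - z‖^2) := by
      intro x; simp only [hψ_def, Stmt8Aux.sumsq]
    have hsub : Metric.closedBall z r ⊆ closure Ω := by
      rw [← closure_ball z hr.ne']
      exact closure_mono hball
    -- comparison: ψ ≤ w on the closed ball
    have hcomp : ∀ x ∈ Metric.closedBall z r, ψ x ≤ w x := by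
      by_contra hcontra
      push_neg at hcontra
      obtain ⟨x₀, hx₀mem, hx₀⟩ := hcontra
      set u : EuclideanSpace ℝ (Fin n) → ℝ := fun x => w x - 1 * ψ x with hu_def
      have huC2 : ContDiff ℝ 2 u := hwC2.sub (contDiff_const.mul hψC2)
      obtain ⟨y₁, hy₁mem, hy₁min⟩ := (isCompact_closedBall z r).exists_isMinOn
        ⟨z, Metric.mem_closedBall_self hr.le⟩ huC2.continuous.continuousOn
      have hux₀ : u x₀ < 0 := by
        have h : u x₀ = w x₀ - ψ x₀ := by simp [hu_def]
        rw [h]; linarith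
      have hy₁neg : u y₁ < 0 := lt_of_le_of_lt (hy₁min hx₀mem) hux₀
      have huy₁ : u y₁ = w y₁ - ψ y₁ := by simp [hu_def]
      have hy₁ball : y₁ ∈ Metric.ball z r := by
        rw [Metric.mem_ball]
        rcases lt_or_eq_of_le (Metric.mem_closedBall.mp hy₁mem) with h | h
        · exact h
        · exfalso
          have hψ0 : ψ y₁ = 0 := by
            rw [hψnorm, ← dist_eq_norm, h]; ring
          have hw1 : 0 ≤ w y₁ := hwnn y₁ (hsub hy₁mem)
          rw [huy₁, hψ0] at hy₁neg
          linarith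
      have hy₁Ω : y₁ ∈ Ω := hball hy₁ball
      have hlmin : IsLocalMin u y₁ :=
        hy₁min.isLocalMin (Filter.mem_of_superset
          (Metric.isOpen_ball.mem_nhds hy₁ball) Metric.ball_subset_closedBall)
      have hlapu := Stmt8Aux.lap_nonneg_of_isLocalMin huC2 hlmin
      have hlapu_eq : lap u y₁ = lap w y₁ - 1 * lap ψ y₁ :=
        Stmt8Aux.lap_sub_const_mul hwC2 hψC2 1 y₁
      have hlapψ : lap ψ y₁ = -(2*n*A) := Stmt8Aux.lap_quad A r z y₁
      have hwlb : -(2*n*A) ≤ lap w y₁ := by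
        rw [hlapu_eq, hlapψ] at hlapu
        linarith
      have hkey := key y₁ hy₁Ω
      have hwub : w y₁ < A * r^2 := by
        have := hψub y₁
        rw [huy₁] at hy₁neg
        linarith
      have hCwub : C * w y₁ ≤ C * (A * r^2) :=
        mul_le_mul_of_nonneg_left hwub.le hCpos.le
      have hAC : C * (A * r^2) ≤ δ / 2 := by
        have hA1 : A ≤ δ/(2*C*r^2) := min_le_left _ _
        have h2 : (0:ℝ) < 2*C*r^2 := by positivity
        have := (le_div_iff₀ h2).mp hA1
        nlinarith
      have hAε : 2*(n:ℝ)*A*ε ≤ δ / 4 := by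
        have hA2 : A ≤ δ/(8*((n:ℝ)+1)*ε) := min_le_right _ _
        have h2 : (0:ℝ) < 8*((n:ℝ)+1)*ε := by positivity
        have h3 := (le_div_iff₀ h2).mp hA2
        have h5 : 0 ≤ A*ε := mul_nonneg hApos.le hε.le
        nlinarith [h3, h5]
      have hεlap : ε * (-(2*n*A)) ≤ ε * lap w y₁ :=
        mul_le_mul_of_nonneg_left hwlb hε.le
      nlinarith
    -- derivative contradiction at y₀
    have hwdiff : Differentiable ℝ w := hwC2.differentiable two_ne_zero
    have hwν : fderiv ℝ w y₀ (ν y₀) = 0 := by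
      have h1 : HasFDerivAt w (fderiv ℝ p y₀ - α • fderiv ℝ φ y₀) y₀ :=
        ((hpreg.differentiable two_ne_zero y₀).hasFDerivAt).sub
          (((hφreg.differentiable two_ne_zero y₀).hasFDerivAt).const_mul α)
      rw [h1.fderiv]
      simp [hpNeumann y₀ hfr, hφNeumann y₀ hfr]
    set g : ℝ → ℝ := fun t => w (y₀ + t • (-(ν y₀))) with hg_def
    have hgd : HasDerivAt g (fderiv ℝ w (y₀ + (0:ℝ) • (-(ν y₀))) (-(ν y₀))) 0 :=
      Stmt8Aux.hasDerivAt_comp_line hwdiff y₀ (-(ν y₀)) 0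
    have hgd0 : HasDerivAt g 0 0 := by
      convert hgd using 1
      simp [map_neg, hwν]
    have hg0 : g 0 = 0 := by simp [hg_def, hw0]
    rw [hasDerivAt_iff_tendsto_slope] at hgd0
    have hslope : Filter.Tendsto (slope g 0) (nhdsWithin 0 (Ioi 0)) (nhds 0) :=
      hgd0.mono_left (nhdsWithin_mono _ (fun x hx => ne_of_gt hx))
    have hev : ∀ᶠ t in nhdsWithin (0:ℝ) (Ioi 0), A * r ≤ slope g 0 t := by
      have hmem : Ioo (0:ℝ) r ∈ nhdsWithin (0:ℝ) (Ioi 0) :=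
        Ioo_mem_nhdsGT_of_mem ⟨le_refl _, hr⟩
      filter_upwards [Filter.eventually_iff.mpr (show {x | x ∈ Ioo (0:ℝ) r} ∈ _ from hmem)] with t htI
      obtain ⟨ht0, htr⟩ := htI
      set xt : EuclideanSpace ℝ (Fin n) := y₀ + t • (-(ν y₀)) with hxt_def
      have hxtz : xt - z = (r - t) • ν y₀ := by
        simp only [hxt_def, hz_def]
        module
      have hxtnorm : ‖xt - z‖ = r - t := by
        rw [hxtz, norm_smul, hν1]
        simp [abs_of_nonneg (by linarith : (0:ℝ) ≤ r - t)]
      have hxtmem : xt ∈ Metric.closedBall z r := by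
        rw [Metric.mem_closedBall, dist_eq_norm, hxtnorm]
        linarith
      have hlb : A * (t * r) ≤ w xt := by
        have h1 := hcomp xt hxtmem
        rw [hψnorm, hxtnorm] at h1
        nlinarith [mul_pos (mul_pos hApos ht0) (show (0:ℝ) < r - t by linarith)]
      have hslope_eq : slope g 0 t = g t / t := by
        simp [slope_def_field, hg0]
      rw [hslope_eq]
      rw [le_div_iff₀ ht0]
      have : g t = w xt := rfl
      rw [this]
      nlinarith
    have hfin : A * r ≤ 0 := ge_of_tendsto hslope hev
    nlinarith
end

section
/- Nonexistence below the principal eigenvalue: let λ₁^ε > 0 and let (λ₁^ε, φ^ε > 0) solve the Neumann eigenproblem −εΔφ − μ(M⋆φ − φ) = (a + λ₁^ε)φ. Then the only nonnegative bounded solution p of −εΔp − μ(M⋆p − p) = p(a(y) − K⋆p − βp) with Neumann conditions is p ≡ 0. -/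
open MeasureTheory Set

section Helpers

variable {n : ℕ}
local notation "E" => EuclideanSpace ℝ (Fin n)

lemma secA {f h : ℝ → ℝ} {L δ : ℝ} (hδ : 0 < δ)
    (hf : ∀ t, HasDerivAt f (h t) t) (h0 : h 0 = 0) (hh : HasDerivAt h L 0)
    (hmin : ∀ t ∈ Set.Ico (0:ℝ) δ, f 0 ≤ f t) : 0 ≤ L := by
  by_contra hL
  push_neg at hL
  have hslope : Filter.Tendsto (fun t => h t / t) (nhdsWithin 0 {(0:ℝ)}ᶜ) (nhds L) := by
    have := hasDerivAt_iff_tendsto_slope.1 hh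
    simpa [slope_fun_def_field, h0] using this
  have hev : ∀ᶠ t in nhdsWithin 0 {(0:ℝ)}ᶜ, h t / t < 0 :=
    hslope.eventually (eventually_lt_nhds hL)
  rw [eventually_nhdsWithin_iff, Metric.eventually_nhds_iff] at hev
  obtain ⟨η, hη, hev⟩ := hev
  set s := min (η / 2) (δ / 2) with hs
  have hs0 : 0 < s := by positivity
  have hneg : ∀ t ∈ Set.Ioo (0:ℝ) s, h t < 0 := by
    intro t ht
    have h1 : h t / t < 0 := by
      apply hev
      · simp only [Real.dist_eq, sub_zero]
        rw [abs_of_pos ht.1]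
        exact ht.2.trans_le ((min_le_left _ _).trans (by linarith))
      · exact (ne_of_gt ht.1)
    exact (div_neg_iff.1 h1).resolve_left (fun hc => absurd ht.1 (not_lt.2 hc.2.le)) |>.1
  have hanti : StrictAntiOn f (Set.Icc 0 s) := by
    apply strictAntiOn_of_deriv_neg (convex_Icc 0 s)
    · exact fun t _ => (hf t).differentiableAt.continuousAt.continuousWithinAt
    · intro t ht
      rw [interior_Icc] at ht
      rw [(hf t).deriv]
      exact hneg t ht
  have h1 : f s < f 0 := hanti (Set.left_mem_Icc.2 hs0.le) (Set.right_mem_Icc.2 hs0.le) hs0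
  have h2 : f 0 ≤ f s := hmin s ⟨hs0.le, lt_of_le_of_lt (min_le_right _ _) (by linarith)⟩
  linarith

lemma keyQ {V : Type*} [NormedAddCommGroup V] [NormedSpace ℝ V] {w : V → ℝ} (hw : ContDiff ℝ 2 w) {y₀ : V} (v b : V) {δ : ℝ} (hδ : 0 < δ)
    (hfv : fderiv ℝ w y₀ v = 0) (hfb : fderiv ℝ w y₀ b = 0)
    (hmin : ∀ t ∈ Set.Ico (0:ℝ) δ, w y₀ ≤ w (y₀ + t • v + (t * t) • b)) :
    0 ≤ fderiv ℝ (fderiv ℝ w) y₀ v v := by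
  set γ : ℝ → V := fun t => y₀ + t • v + (t * t) • b with hγdef
  have hγ : ∀ t : ℝ, HasDerivAt γ (v + (2 * t) • b) t := by
    intro t
    have h1 : HasDerivAt (fun s : ℝ => y₀ + s • v) v t := by
      simpa using ((hasDerivAt_id t).smul_const v).const_add y₀
    have h2 : HasDerivAt (fun s : ℝ => (s * s) • b) ((2 * t) • b) t := by
      have := ((hasDerivAt_id t).mul (hasDerivAt_id t)).smul_const b
      simpa [two_mul, add_smul] using this
    exact h1.add h2
  have hγ0 : γ 0 = y₀ := by simp [hγdef]
  have hwdiff : Differentiable ℝ w := hw.differentiable two_ne_zero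
  set h : ℝ → ℝ := fun t => (fderiv ℝ w (γ t)) (v + (2 * t) • b) with hhdef
  have hf : ∀ t : ℝ, HasDerivAt (fun s => w (γ s)) (h t) t := fun t =>
    ((hwdiff (γ t)).hasFDerivAt).comp_hasDerivAt t (hγ t)
  have hfd1 : ContDiff ℝ 1 (fderiv ℝ w) := hw.fderiv_right (by norm_num)
  have hc : HasDerivAt (fun t => fderiv ℝ w (γ t))
      ((fderiv ℝ (fderiv ℝ w) (γ 0)) (v + (2 * (0:ℝ)) • b)) 0 :=
    ((hfd1.differentiable one_ne_zero (γ 0)).hasFDerivAt).comp_hasDerivAt 0 (hγ 0)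
  have hu : HasDerivAt (fun t : ℝ => v + (2 * t) • b) ((2:ℝ) • b) 0 := by
    have := ((hasDerivAt_const (0:ℝ) (2:ℝ)).mul (hasDerivAt_id 0)).smul_const b
    simpa using this.const_add v
  have hh : HasDerivAt h (fderiv ℝ (fderiv ℝ w) y₀ v v) 0 := by
    have e := hc.clm_apply hu
    have e2 : (fderiv ℝ (fderiv ℝ w) (γ 0)) (v + (2 * (0:ℝ)) • b) ((fun t : ℝ => v + (2 * t) • b) 0)
        + (fderiv ℝ w (γ 0)) ((2:ℝ) • b) = fderiv ℝ (fderiv ℝ w) y₀ v v := by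
      rw [hγ0]
      simp [hfb]
    rw [← e2]
    exact e
  have h0 : h 0 = 0 := by
    simp only [hhdef, hγ0]
    simpa using hfv
  exact secA hδ hf h0 hh (by simpa [hγ0, hγdef] using hmin)


lemma parab_mem {u v : E} (hu : ‖u‖ = 1) (huv : inner (𝕜 := ℝ) u v = 0) {r t : ℝ} (hr : 0 < r)
    (hv : v ≠ 0) (ht : |t| ≤ r / ‖v‖) (c y₀ : E) (hc : y₀ - c = r • u) :
    ‖(y₀ + t • v + (t * t) • (-(‖v‖^2 / r) • u)) - c‖ ≤ r := by
  have hvn : (0:ℝ) < ‖v‖ := norm_pos_iff.2 hv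
  set k : ℝ := ‖v‖^2 / r with hk
  have heq : (y₀ + t • v + (t * t) • (-(k) • u)) - c = (r - t*t*k) • u + t • v := by
    rw [smul_smul]
    have : (y₀ + t • v + (t * t * -k) • u) - c = (y₀ - c) + (t * t * -k) • u + t • v := by
      abel
    rw [this, hc, ← add_smul]
    ring_nf
  rw [heq]
  have hnorm : ‖(r - t*t*k) • u + t • v‖^2 = (r - t*t*k)^2 + t^2 * ‖v‖^2 := by
    rw [norm_add_sq_real]
    rw [norm_smul, norm_smul, real_inner_smul_left, real_inner_smul_right, huv]
    simp [hu, mul_pow, abs_mul_abs_self]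
  have h1 : t^2 * ‖v‖^2 ≤ r^2 := by
    have h2 : |t| * ‖v‖ ≤ r := (le_div_iff₀ hvn).1 ht
    have h3 : (|t| * ‖v‖)^2 ≤ r^2 := by
      apply sq_le_sq' _ h2
      have : 0 ≤ |t| * ‖v‖ := by positivity
      linarith
    calc t^2 * ‖v‖^2 = (|t| * ‖v‖)^2 := by rw [mul_pow, sq_abs]
    _ ≤ r^2 := h3
  have hkr : k * r = ‖v‖^2 := by rw [hk]; field_simp
  have key : (t*t*k)^2 ≤ t^2*‖v‖^2 := by
    have e : (t*t*k)^2 = (t^2*‖v‖^2)^2 / r^2 := by rw [hk]; field_simp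
    rw [e, div_le_iff₀ (by positivity : (0:ℝ) < r^2)]
    nlinarith [h1, mul_nonneg (sq_nonneg t) (sq_nonneg ‖v‖)]
  have hkr2 : t*t*(k*r) = t*t*‖v‖^2 := by rw [hkr]
  have hle : ‖(r - t*t*k) • u + t • v‖^2 ≤ r^2 := by
    rw [hnorm]
    nlinarith [key, hkr2]
  nlinarith [norm_nonneg ((r - t*t*k) • u + t • v), hr]

lemma line_mem {u v : E} (hu : ‖u‖ = 1) {r t : ℝ} (hr : 0 < r) (ht : 0 ≤ t)
    (ht2 : 2 * r * inner (𝕜 := ℝ) u v + t * ‖v‖^2 ≤ 0) (c y₀ : E) (hc : y₀ - c = r • u) :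
    ‖(y₀ + t • v) - c‖ ≤ r := by
  have heq : (y₀ + t • v) - c = r • u + t • v := by
    rw [← hc]; abel
  rw [heq]
  have hnorm : ‖r • u + t • v‖^2 = r^2 + 2*r*t*(inner (𝕜 := ℝ) u v) + t^2*‖v‖^2 := by
    rw [norm_add_sq_real, norm_smul, norm_smul, real_inner_smul_left, real_inner_smul_right]
    simp [hu, mul_pow, abs_of_pos hr, abs_of_nonneg ht]
    ring
  have hle : ‖r • u + t • v‖^2 ≤ r^2 := by
    rw [hnorm]
    nlinarith [mul_le_mul_of_nonneg_left ht2 ht]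
  nlinarith [norm_nonneg (r • u + t • v), hr]

lemma Q_nonneg_boundary {w : E → ℝ} (hw : ContDiff ℝ 2 w) {S : Set E}
    (hwnn : ∀ y ∈ S, 0 ≤ w y) {y₀ : E} (hy₀ : y₀ ∈ S) (hw0 : w y₀ = 0)
    {u : E} (hu : ‖u‖ = 1) (hNeu : fderiv ℝ w y₀ u = 0)
    {r : ℝ} (hr : 0 < r) (hball : Metric.closedBall (y₀ - r • u) r ⊆ S) :
    ∀ v : E, 0 ≤ fderiv ℝ (fderiv ℝ w) y₀ v v := by
  set c : E := y₀ - r • u with hcdef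
  have hc : y₀ - c = r • u := by rw [hcdef]; abel
  have hwdiff : Differentiable ℝ w := hw.differentiable two_ne_zero
  -- Step 1: tangential derivatives vanish
  have hDt : ∀ v : E, inner (𝕜 := ℝ) u v = 0 → fderiv ℝ w y₀ v = 0 := by
    intro v huv
    rcases eq_or_ne v 0 with rfl | hv0
    · simp
    have hvn : (0:ℝ) < ‖v‖ := norm_pos_iff.2 hv0
    set b : E := -(‖v‖^2 / r) • u with hbdef
    set γ : ℝ → E := fun t => y₀ + t • v + (t * t) • b with hγdef
    have hγ0 : γ 0 = y₀ := by simp [hγdef]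
    have hγmem : ∀ t : ℝ, |t| ≤ r / ‖v‖ → γ t ∈ S := by
      intro t ht
      apply hball
      rw [Metric.mem_closedBall, dist_eq_norm]
      exact parab_mem hu huv hr hv0 ht c y₀ hc
    have hmin : IsLocalMin (fun t => w (γ t)) 0 := by
      rw [IsLocalMin, IsMinFilter]
      rw [Metric.eventually_nhds_iff]
      refine ⟨r / ‖v‖, by positivity, fun t ht => ?_⟩
      simp only [hγ0, hw0]
      apply hwnn
      apply hγmem
      rw [Real.dist_eq, sub_zero] at ht
      exact ht.le
    have hγd : HasDerivAt γ v 0 := by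
      have h1 : HasDerivAt (fun s : ℝ => y₀ + s • v) v 0 := by
        simpa using ((hasDerivAt_id (0:ℝ)).smul_const v).const_add y₀
      have h2 : HasDerivAt (fun s : ℝ => (s * s) • b) ((2 * (0:ℝ)) • b) 0 := by
        have := ((hasDerivAt_id (0:ℝ)).mul (hasDerivAt_id (0:ℝ))).smul_const b
        simpa [two_mul, add_smul] using this
      have e := h1.add h2
      simp only [mul_zero, zero_smul, add_zero] at e
      exact e
    have hg : HasDerivAt (fun t => w (γ t)) (fderiv ℝ w y₀ v) 0 := by
      have := ((hwdiff (γ 0)).hasFDerivAt).comp_hasDerivAt 0 hγd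
      rwa [hγ0] at this
    exact hmin.hasDerivAt_eq_zero hg
  -- Step 2: full gradient vanishes
  have hD : ∀ x : E, fderiv ℝ w y₀ x = 0 := by
    intro x
    have hdec : x = (inner (𝕜 := ℝ) u x) • u + (x - (inner (𝕜 := ℝ) u x) • u) := by abel
    have htan : inner (𝕜 := ℝ) u (x - (inner (𝕜 := ℝ) u x) • u) = 0 := by
      rw [inner_sub_right, real_inner_smul_right, real_inner_self_eq_norm_sq, hu]
      ring
    rw [hdec, map_add, ContinuousLinearMap.map_smul, hNeu, hDt _ htan]
    simp
  -- Step 3: Q v v ≥ 0 for inward directions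
  have hQhalf : ∀ v : E, inner (𝕜 := ℝ) u v < 0 → 0 ≤ fderiv ℝ (fderiv ℝ w) y₀ v v := by
    intro v huv
    have hv0 : v ≠ 0 := by
      intro h; rw [h, inner_zero_right] at huv; exact lt_irrefl 0 huv
    have hvn : (0:ℝ) < ‖v‖ := norm_pos_iff.2 hv0
    set δ : ℝ := -(2 * r * inner (𝕜 := ℝ) u v) / ‖v‖^2 with hδdef
    have hδ : 0 < δ := by
      apply div_pos _ (by positivity)
      nlinarith
    refine keyQ hw v 0 hδ (hD v) (by simp) ?_
    intro t ht
    rw [hw0]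
    simp only [smul_zero, add_zero]
    apply hwnn
    apply hball
    rw [Metric.mem_closedBall, dist_eq_norm]
    apply line_mem hu hr ht.1 _ c y₀ hc
    have : t * ‖v‖^2 < -(2 * r * inner (𝕜 := ℝ) u v) := by
      rw [hδdef] at ht
      calc t * ‖v‖^2 < δ * ‖v‖^2 := by
            apply mul_lt_mul_of_pos_right ht.2 (by positivity)
      _ = -(2 * r * inner (𝕜 := ℝ) u v) := by
            rw [hδdef]; field_simp
    linarith
  -- Step 4: extend to all directions
  have hQle : ∀ v : E, inner (𝕜 := ℝ) u v ≤ 0 → 0 ≤ fderiv ℝ (fderiv ℝ w) y₀ v v := by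
    intro v huv
    set A := fderiv ℝ (fderiv ℝ w) y₀ with hA
    have hcont : Continuous (fun x : E => A x x) := A.continuous.clm_apply continuous_id
    have htend : Filter.Tendsto (fun s : ℝ => A (v - s • u) (v - s • u)) (nhdsWithin 0 (Set.Ioi 0))
        (nhds (A v v)) := by
      have h1 : Filter.Tendsto (fun s : ℝ => v - s • u) (nhdsWithin 0 (Set.Ioi 0)) (nhds v) := by
        have : Continuous (fun s : ℝ => v - s • u) := continuous_const.sub (continuous_id.smul continuous_const)
        have := this.tendsto 0
        simp only [zero_smul, sub_zero] at this
        exact this.mono_left nhdsWithin_le_nhds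
      exact (hcont.tendsto v).comp h1
    apply ge_of_tendsto htend
    filter_upwards [self_mem_nhdsWithin] with s hs
    apply hQhalf
    rw [inner_sub_right, real_inner_smul_right, real_inner_self_eq_norm_sq, hu]
    simp only [Set.mem_Ioi] at hs
    nlinarith
  intro v
  rcases le_or_gt (inner (𝕜 := ℝ) u v) 0 with h | h
  · exact hQle v h
  · have : fderiv ℝ (fderiv ℝ w) y₀ v v = fderiv ℝ (fderiv ℝ w) y₀ (-v) (-v) := by
      simp
    rw [this]
    apply hQle
    rw [inner_neg_right]
    linarith

lemma Q_nonneg_interior {w : E → ℝ} (hw : ContDiff ℝ 2 w) {S : Set E}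
    (hwnn : ∀ y ∈ S, 0 ≤ w y) {y₀ : E} (hw0 : w y₀ = 0)
    {ρ : ℝ} (hρ : 0 < ρ) (hball : Metric.ball y₀ ρ ⊆ S) :
    ∀ v : E, 0 ≤ fderiv ℝ (fderiv ℝ w) y₀ v v := by
  have hmin : IsLocalMin w y₀ := by
    rw [IsLocalMin, IsMinFilter, Metric.eventually_nhds_iff]
    exact ⟨ρ, hρ, fun y hy => hw0 ▸ hwnn y (hball (Metric.mem_ball.2 hy))⟩
  have hD : fderiv ℝ w y₀ = 0 := hmin.fderiv_eq_zero
  intro v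
  have hδ : (0:ℝ) < ρ / (‖v‖ + 1) := by positivity
  refine keyQ hw v 0 hδ (by rw [hD]; rfl) (by rw [hD]; rfl) ?_
  intro t ht
  rw [hw0]
  apply hwnn
  apply hball
  rw [Metric.mem_ball, dist_eq_norm]
  have : (y₀ + t • v + (t * t) • (0:E)) - y₀ = t • v := by
    simp
  rw [this, norm_smul]
  have h1 : ‖v‖ < ‖v‖ + 1 := by linarith
  have h2 : ‖t‖ = t := by rw [Real.norm_eq_abs]; exact abs_of_nonneg ht.1
  rw [h2]
  calc t * ‖v‖ ≤ t * (‖v‖ + 1) := by nlinarith [ht.1]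
  _ < (ρ / (‖v‖ + 1)) * (‖v‖ + 1) := by
      apply mul_lt_mul_of_pos_right ht.2 (by positivity)
  _ = ρ := by field_simp

lemma cont_integral {F : E → E → ℝ} {C S : Set E} (hCcpt : IsCompact C)
    (hS : S ⊆ C) (hSm : MeasurableSet S)
    (hF : ContinuousOn (fun q : E × E => F q.1 q.2) (C ×ˢ C)) {g : E → ℝ} (hg : Continuous g) :
    ContinuousOn (fun y => ∫ z in S, F y z * g z) C := by
  obtain ⟨B1, hB1⟩ := (hCcpt.prod hCcpt).exists_bound_of_continuousOn hF
  obtain ⟨B2, hB2⟩ := hCcpt.exists_bound_of_continuousOn hg.continuousOn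
  intro y₀ hy₀
  apply MeasureTheory.continuousWithinAt_of_dominated
    (bound := fun _ => (max B1 0) * (max B2 0))
  · filter_upwards [self_mem_nhdsWithin] with y hy
    have hFy : ContinuousOn (fun z => F y z) C := by
      apply hF.comp (Continuous.continuousOn (continuous_const.prodMk continuous_id))
      intro z hz
      exact Set.mk_mem_prod hy hz
    exact ((hFy.mul hg.continuousOn).mono hS).aestronglyMeasurable hSm
  · filter_upwards [self_mem_nhdsWithin] with y hy
    rw [MeasureTheory.ae_restrict_iff' hSm]
    apply MeasureTheory.ae_of_all
    intro z hz
    rw [norm_mul]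
    apply mul_le_mul _ _ (norm_nonneg _) (le_max_right _ _)
    · exact le_trans (hB1 (y, z) (Set.mk_mem_prod hy (hS hz))) (le_max_left _ _)
    · exact le_trans (hB2 z (hS hz)) (le_max_left _ _)
  · rw [MeasureTheory.integrable_const_iff]
    right
    exact ⟨lt_of_le_of_lt (by simpa using MeasureTheory.measure_mono (μ := volume) hS)
      (hCcpt.measure_lt_top)⟩
  · rw [MeasureTheory.ae_restrict_iff' hSm]
    apply MeasureTheory.ae_of_all
    intro z hz
    have h1 : ContinuousWithinAt (fun y => F y z) C y₀ := by
      have := (hF (y₀, z) (Set.mk_mem_prod hy₀ (hS hz))).comp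
        (f := fun y : E => (y, z)) (continuous_id.prodMk continuous_const).continuousWithinAt
        (fun y hy => Set.mk_mem_prod hy (hS hz))
      exact this
    exact h1.mul continuousWithinAt_const

lemma lap_lin {f g : E → ℝ} (hf : ContDiff ℝ 2 f) (hg : ContDiff ℝ 2 g) (c : ℝ) (y : E) :
    lap (fun x => c * f x - g x) y = c * lap f y - lap g y := by
  have hdf : Differentiable ℝ f := hf.differentiable two_ne_zero
  have hdg : Differentiable ℝ g := hg.differentiable two_ne_zero
  have hf1 : Differentiable ℝ (fderiv ℝ f) := (hf.fderiv_right (m := 1) (by norm_num)).differentiable one_ne_zero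
  have hg1 : Differentiable ℝ (fderiv ℝ g) := (hg.fderiv_right (m := 1) (by norm_num)).differentiable one_ne_zero
  have hd1 : (fderiv ℝ (fun x => c * f x - g x)) = fun x => c • fderiv ℝ f x - fderiv ℝ g x := by
    funext x
    rw [fderiv_fun_sub ((hdf x).const_mul c) (hdg x), fderiv_const_mul (hdf x) c]
  have hd2 : fderiv ℝ (fderiv ℝ (fun x => c * f x - g x)) y
      = c • fderiv ℝ (fderiv ℝ f) y - fderiv ℝ (fderiv ℝ g) y := by
    rw [hd1, fderiv_fun_sub (f := fun x => c • fderiv ℝ f x) ((hf1 y).const_smul c) (hg1 y), fderiv_fun_const_smul (hf1 y) c]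
  unfold lap
  rw [Finset.mul_sum, ← Finset.sum_sub_distrib]
  apply Finset.sum_congr rfl
  intro i _
  rw [iteratedFDeriv_two_apply, iteratedFDeriv_two_apply, iteratedFDeriv_two_apply, hd2]
  simp

lemma lap_cont {f : E → ℝ} (hf : ContDiff ℝ 2 f) : Continuous (lap f) := by
  apply continuous_finset_sum
  intro i _
  have h2 : Continuous (fun y => iteratedFDeriv ℝ 2 f y) := hf.continuous_iteratedFDeriv le_rfl
  exact (continuous_eval_const _).comp h2


lemma ext_zero {n : ℕ} {G : EuclideanSpace ℝ (Fin n) → ℝ} {Ω : Set (EuclideanSpace ℝ (Fin n))}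
    (hG : ContinuousOn G (closure Ω)) (h0 : ∀ y ∈ Ω, G y = 0) : ∀ y ∈ closure Ω, G y = 0 := by
  intro y hy
  have h1 : ContinuousWithinAt G Ω y := (hG y hy).mono subset_closure
  have hne : (nhdsWithin y Ω).NeBot := mem_closure_iff_nhdsWithin_neBot.1 hy
  have h3 : Filter.Tendsto G (nhdsWithin y Ω) (nhds 0) := by
    apply Filter.Tendsto.congr' _ tendsto_const_nhds
    filter_upwards [self_mem_nhdsWithin] with z hz
    exact (h0 z hz).symm
  exact tendsto_nhds_unique h1 h3

end Helpers

/-- Nonexistence below the principal eigenvalue. If λ₁^ε > 0 and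
(λ₁^ε, φ^ε > 0) solves the Neumann eigenproblem −εΔφ − μ(M⋆φ − φ) = (a + λ₁^ε)φ, then the
only nonnegative bounded Neumann solution of −εΔp − μ(M⋆p − p) = p(a − K⋆p − βp) is p ≡ 0. -/
theorem stmt16 {n : ℕ} (Ω : Set (EuclideanSpace ℝ (Fin n)))
    (hΩopen : IsOpen Ω) (hΩbdd : Bornology.IsBounded Ω) (hΩne : Ω.Nonempty)
    (hC3 : ∃ R > (0:ℝ), ContDiffOn ℝ 3 (fun y => Metric.infDist y (frontier Ω))
      {y ∈ closure Ω | Metric.infDist y (frontier Ω) < R})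
    (ν : EuclideanSpace ℝ (Fin n) → EuclideanSpace ℝ (Fin n))
    (hν_unit : ∀ y ∈ frontier Ω, ‖ν y‖ = 1)
    (hν_out : ∀ y ∈ frontier Ω, ∃ r > (0:ℝ), Metric.ball (y - r • ν y) r ⊆ Ω)
    (a : EuclideanSpace ℝ (Fin n) → ℝ) (ha : ContinuousOn a (closure Ω))
    (μ ε β : ℝ) (hμ : 0 < μ) (hε : 0 < ε) (hβ : 0 ≤ β)
    (M K : EuclideanSpace ℝ (Fin n) → EuclideanSpace ℝ (Fin n) → ℝ)
    (hM : ContinuousOn (fun q : EuclideanSpace ℝ (Fin n) × EuclideanSpace ℝ (Fin n) => M q.1 q.2)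
      (closure Ω ×ˢ closure Ω))
    (hMpos : ∀ y ∈ closure Ω, ∀ z ∈ closure Ω, 0 < M y z)
    (hK : ContinuousOn (fun q : EuclideanSpace ℝ (Fin n) × EuclideanSpace ℝ (Fin n) => K q.1 q.2)
      (closure Ω ×ˢ closure Ω))
    (hKpos : ∀ y ∈ closure Ω, ∀ z ∈ closure Ω, 0 < K y z)
    -- the principal eigenpair, with positive eigenvalue
    (lam : ℝ) (hlam : 0 < lam)
    (φ : EuclideanSpace ℝ (Fin n) → ℝ)
    (hφreg : ContDiff ℝ 2 φ) (hφpos : ∀ y ∈ closure Ω, 0 < φ y)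
    (heig : ∀ y ∈ Ω,
      -ε * lap φ y - μ * ((∫ z in closure Ω, M y z * φ z) - φ y) = (a y + lam) * φ y)
    (hφNeumann : ∀ y ∈ frontier Ω, fderiv ℝ φ y (ν y) = 0)
    -- a nonnegative bounded Neumann solution
    (p : EuclideanSpace ℝ (Fin n) → ℝ)
    (hpreg : ContDiff ℝ 2 p)
    (hpnonneg : ∀ y ∈ closure Ω, 0 ≤ p y)
    (hpbdd : BddAbove (p '' closure Ω))
    (heq : ∀ y ∈ Ω,
      -ε * lap p y - μ * ((∫ z in closure Ω, M y z * p z) - p y)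
        = p y * (a y - (∫ z in Ω, K y z * p z) - β * p y))
    (hpNeumann : ∀ y ∈ frontier Ω, fderiv ℝ p y (ν y) = 0) :
    ∀ y ∈ closure Ω, p y = 0 := by
  classical
  have hCcpt : IsCompact (closure Ω) :=
    Metric.isCompact_of_isClosed_isBounded isClosed_closure hΩbdd.closure
  have hCm : MeasurableSet (closure Ω) := isClosed_closure.measurableSet
  have hΩm : MeasurableSet Ω := hΩopen.measurableSet
  have hCne : (closure Ω).Nonempty := hΩne.closure
  have hφc : Continuous φ := hφreg.continuous
  have hpc : Continuous p := hpreg.continuous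
  have hratio : ContinuousOn (fun y => p y / φ y) (closure Ω) :=
    ContinuousOn.div hpc.continuousOn hφc.continuousOn (fun y hy => (hφpos y hy).ne')
  obtain ⟨y₀, hy₀C, hy₀max⟩ := hCcpt.exists_isMaxOn hCne hratio
  rw [isMaxOn_iff] at hy₀max
  set α : ℝ := p y₀ / φ y₀ with hαdef
  have hφy₀pos := hφpos y₀ hy₀C
  suffices hp0 : p y₀ = 0 by
    intro y hy
    have h1 := hy₀max y hy
    have hα0 : α = 0 := by rw [hαdef, hp0, zero_div]
    rw [hα0] at h1
    have h2 : p y ≤ 0 := by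
      have h3 := (div_le_iff₀ (hφpos y hy)).1 h1
      simpa using h3
    exact le_antisymm h2 (hpnonneg y hy)
  by_contra hp0ne
  have hpy₀pos : 0 < p y₀ := lt_of_le_of_ne (hpnonneg y₀ hy₀C) (Ne.symm hp0ne)
  have hαpos : 0 < α := div_pos hpy₀pos hφy₀pos
  set w : EuclideanSpace ℝ (Fin n) → ℝ := fun y => α * φ y - p y with hwdef
  have hwreg : ContDiff ℝ 2 w := (contDiff_const.mul hφreg).sub hpreg
  have hwnn : ∀ y ∈ closure Ω, 0 ≤ w y := by
    intro y hy
    have h1 := hy₀max y hy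
    rw [div_le_iff₀ (hφpos y hy)] at h1
    simp only [hwdef]
    linarith
  have htouch : α * φ y₀ = p y₀ := div_mul_cancel₀ _ hφy₀pos.ne'
  have hw0 : w y₀ = 0 := by simp only [hwdef]; linarith
  -- second derivatives of w at y₀ are nonnegative in every direction
  have hQ : ∀ v, 0 ≤ fderiv ℝ (fderiv ℝ w) y₀ v v := by
    by_cases hy₀Ω : y₀ ∈ Ω
    · obtain ⟨ρ, hρ, hball⟩ := Metric.isOpen_iff.1 hΩopen y₀ hy₀Ω
      exact Q_nonneg_interior hwreg hwnn hw0 hρ (hball.trans subset_closure)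
    · have hfr : y₀ ∈ frontier Ω := by
        rw [frontier, hΩopen.interior_eq]
        exact ⟨hy₀C, hy₀Ω⟩
      obtain ⟨r, hr, hball⟩ := hν_out y₀ hfr
      have hdφ := hφreg.differentiable two_ne_zero
      have hdp := hpreg.differentiable two_ne_zero
      have hNeuw : fderiv ℝ w y₀ (ν y₀) = 0 := by
        have hfd : fderiv ℝ w y₀ = α • fderiv ℝ φ y₀ - fderiv ℝ p y₀ := by
          simp only [hwdef]
          rw [fderiv_fun_sub ((hdφ y₀).const_mul α) (hdp y₀), fderiv_const_mul (hdφ y₀) α]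
        rw [hfd]
        simp [hφNeumann y₀ hfr, hpNeumann y₀ hfr]
      have hclosed : Metric.closedBall (y₀ - r • ν y₀) r ⊆ closure Ω := by
        rw [← closure_ball _ (ne_of_gt hr)]
        exact closure_mono hball
      exact Q_nonneg_boundary hwreg hwnn hy₀C hw0 (hν_unit y₀ hfr) hNeuw hr hclosed
  have hlapw : 0 ≤ lap w y₀ := by
    unfold lap
    apply Finset.sum_nonneg
    intro i _
    rw [iteratedFDeriv_two_apply]
    exact hQ _
  have hlapw' : lap w y₀ = α * lap φ y₀ - lap p y₀ := lap_lin hφreg hpreg α y₀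
  -- the equations extend to the closure by continuity
  have hIφcont : ContinuousOn (fun y => ∫ z in closure Ω, M y z * φ z) (closure Ω) :=
    cont_integral hCcpt (subset_refl _) hCm hM hφc
  have hIpcont : ContinuousOn (fun y => ∫ z in closure Ω, M y z * p z) (closure Ω) :=
    cont_integral hCcpt (subset_refl _) hCm hM hpc
  have hJpcont : ContinuousOn (fun y => ∫ z in Ω, K y z * p z) (closure Ω) :=
    cont_integral hCcpt subset_closure hΩm hK hpc
  have hext1 : ∀ y ∈ closure Ω,
      -ε * lap φ y - μ * ((∫ z in closure Ω, M y z * φ z) - φ y) = (a y + lam) * φ y := by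
    have hG : ContinuousOn (fun y =>
        -ε * lap φ y - μ * ((∫ z in closure Ω, M y z * φ z) - φ y) - (a y + lam) * φ y)
        (closure Ω) := by
      apply ContinuousOn.sub
      · apply ContinuousOn.sub
        · exact (continuous_const.mul (lap_cont hφreg)).continuousOn
        · exact continuousOn_const.mul (hIφcont.sub hφc.continuousOn)
      · exact (ha.add continuousOn_const).mul hφc.continuousOn
    have := ext_zero hG (fun y hy => by rw [heig y hy]; ring)
    intro y hy
    have h := this y hy
    linarith
  have hext2 : ∀ y ∈ closure Ω,
      -ε * lap p y - μ * ((∫ z in closure Ω, M y z * p z) - p y)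
        = p y * (a y - (∫ z in Ω, K y z * p z) - β * p y) := by
    have hG : ContinuousOn (fun y =>
        -ε * lap p y - μ * ((∫ z in closure Ω, M y z * p z) - p y)
          - p y * (a y - (∫ z in Ω, K y z * p z) - β * p y)) (closure Ω) := by
      apply ContinuousOn.sub
      · apply ContinuousOn.sub
        · exact (continuous_const.mul (lap_cont hpreg)).continuousOn
        · exact continuousOn_const.mul (hIpcont.sub hpc.continuousOn)
      · exact hpc.continuousOn.mul
          ((ha.sub hJpcont).sub (continuousOn_const.mul hpc.continuousOn))
    have := ext_zero hG (fun y hy => by rw [heq y hy]; ring)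
    intro y hy
    have h := this y hy
    linarith
  -- sign information
  have hMcontz : ContinuousOn (fun z => M y₀ z) (closure Ω) := by
    apply hM.comp (Continuous.continuousOn (continuous_const.prodMk continuous_id))
    intro z hz
    exact Set.mk_mem_prod hy₀C hz
  have hintφ : IntegrableOn (fun z => M y₀ z * φ z) (closure Ω) :=
    (hMcontz.mul hφc.continuousOn).integrableOn_compact hCcpt
  have hintp : IntegrableOn (fun z => M y₀ z * p z) (closure Ω) :=
    (hMcontz.mul hpc.continuousOn).integrableOn_compact hCcpt
  have hIw : 0 ≤ α * (∫ z in closure Ω, M y₀ z * φ z) - ∫ z in closure Ω, M y₀ z * p z := by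
    have heqint : α * (∫ z in closure Ω, M y₀ z * φ z) - (∫ z in closure Ω, M y₀ z * p z)
        = ∫ z in closure Ω, M y₀ z * w z := by
      rw [← MeasureTheory.integral_const_mul, ← MeasureTheory.integral_sub
        (hintφ.const_mul α) hintp]
      apply MeasureTheory.integral_congr_ae
      apply MeasureTheory.ae_of_all
      intro z
      simp only [hwdef]
      ring
    rw [heqint]
    exact MeasureTheory.setIntegral_nonneg hCm
      (fun z hz => mul_nonneg (hMpos y₀ hy₀C z hz).le (hwnn z hz))
  have hJp : 0 ≤ ∫ z in Ω, K y₀ z * p z :=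
    MeasureTheory.setIntegral_nonneg hΩm (fun z hz =>
      mul_nonneg (hKpos y₀ hy₀C z (subset_closure hz)).le (hpnonneg z (subset_closure hz)))
  -- combine
  have e1 := hext1 y₀ hy₀C
  have e2 := hext2 y₀ hy₀C
  have key : -ε * (α * lap φ y₀ - lap p y₀)
      - μ * (α * (∫ z in closure Ω, M y₀ z * φ z) - ∫ z in closure Ω, M y₀ z * p z)
      = p y₀ * lam + p y₀ * (∫ z in Ω, K y₀ z * p z) + β * (p y₀)^2 := by
    linear_combination α * e1 - e2 + (lam + a y₀ - μ) * htouch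
  have hLw : 0 ≤ α * lap φ y₀ - lap p y₀ := by rw [← hlapw']; exact hlapw
  nlinarith [mul_nonneg hε.le hLw, mul_nonneg hμ.le hIw, mul_pos hpy₀pos hlam,
    mul_nonneg hpy₀pos.le hJp, mul_nonneg hβ (sq_nonneg (p y₀)), key]
end
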